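/- arXiv:1902.10820 — 9 statements merged into one kernel-verified Lean document; each statement's English description precedes it below -/
import Mathlib

section
/- For all natural numbers m and n, there is a bijection between the set of functions f : Fin n → Fin m ⊕ Fin 2 that are injective on the left part, and the set of graph morphisms g from the standard m-cube to the standard n-cube that preserve pointwise meets and pointwise joins, i.e., g (x ⊓ y) = g x ⊓ g y and g (x ⊔ y) = g x ⊔ g y for all vertices x, y (where ⊓ and ⊔ are the pointwise Boolean 'and' and 'or' on Fin k → Bool). -/
/-- A function into a sum type is injective on the left part. -/
def LInj {α β γ : Type*} (f : α → β ⊕ γ) : Prop :=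
  ∀ a₁ a₂ b, f a₁ = Sum.inl b → f a₂ = Sum.inl b → a₁ = a₂

/-- Edge relation of the standard n-cube. -/
def CubeE (n : ℕ) (x y : Fin n → Bool) : Prop :=
  x = y ∨ ∃ i : Fin n, x i = false ∧ y i = true ∧ ∀ j, j ≠ i → x j = y j

/-- Graph morphisms between directed graphs given by edge relations. -/
def IsGraphHom {V V' : Type*} (E : V → V → Prop) (E' : V' → V' → Prop) (g : V → V') : Prop :=
  ∀ x y, E x y → E' (g x) (g y)

/-- Preservation of pointwise meets. -/
def PresMeet {m n : ℕ} (g : (Fin m → Bool) → (Fin n → Bool)) : Prop :=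
  ∀ x y, g (fun i => x i && y i) = fun i => g x i && g y i

/-- Preservation of pointwise joins. -/
def PresJoin {m n : ℕ} (g : (Fin m → Bool) → (Fin n → Bool)) : Prop :=
  ∀ x y, g (fun i => x i || y i) = fun i => g x i || g y i

/-- The bit of an element of `Fin 2`. -/
def bitOf (c : Fin 2) : Bool := decide (c = 1)

/-- The map from functions to graph morphisms. -/
def Phi {m n : ℕ} (f : Fin n → Fin m ⊕ Fin 2) : (Fin m → Bool) → (Fin n → Bool) :=
  fun x i => Sum.elim x bitOf (f i)

lemma bitOf_inj : Function.Injective bitOf := by decide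

/-- Lattice homs Bool^m → Bool are projections or constants. -/
lemma classify {m : ℕ} (h : (Fin m → Bool) → Bool)
    (hm : ∀ x y, h (fun i => x i && y i) = (h x && h y))
    (hj : ∀ x y, h (fun i => x i || y i) = (h x || h y)) :
    (∃ j, h = fun x => x j) ∨ (∃ c : Bool, h = fun _ => c) := by
  by_cases hb : h (fun _ => false) = true
  · right; refine ⟨true, funext fun x => ?_⟩
    have := hm (fun _ => false) x
    simp only [Bool.false_and] at this
    rw [hb] at this; simpa using this.symm
  by_cases ht : h (fun _ => true) = true
  swap
  · right; refine ⟨false, funext fun x => ?_⟩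
    have := hj (fun _ => true) x
    simp only [Bool.true_or] at this
    simp only [Bool.not_eq_true] at ht
    rw [ht] at this
    simpa using this.symm
  simp only [Bool.not_eq_true] at hb
  have key : ∀ s : Finset (Fin m),
      (h (fun i => decide (i ∈ s)) = true ↔ ∃ j ∈ s, h (fun i => decide (i = j)) = true) := by
    intro s
    induction s using Finset.induction_on with
    | empty => simp [hb]
    | @insert a s ha ih =>
      have hrew : (fun i => decide (i ∈ insert a s))
          = fun i => (fun k => decide (k = a)) i || (fun k => decide (k ∈ s)) i := by
        funext i; simp [Finset.mem_insert]
      rw [hrew, hj]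
      simp only [Bool.or_eq_true, ih, Finset.mem_insert]
      constructor
      · rintro (h1 | ⟨j, hj1, hj2⟩)
        · exact ⟨a, Or.inl rfl, h1⟩
        · exact ⟨j, Or.inr hj1, hj2⟩
      · rintro ⟨j, (rfl | hj1), hj2⟩
        · exact Or.inl hj2
        · exact Or.inr ⟨j, hj1, hj2⟩
  have rep : ∀ x : Fin m → Bool, (fun i => decide (i ∈ Finset.univ.filter (fun k => x k = true))) = x := by
    intro x; funext i; simp
  obtain ⟨j, -, hje⟩ : ∃ j ∈ Finset.univ, h (fun i => decide (i = j)) = true := by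
    refine (key Finset.univ).1 ?_
    have : (fun i : Fin m => decide (i ∈ Finset.univ)) = fun _ => true := by funext i; simp
    rw [this]; exact ht
  have huniq : ∀ k, h (fun i => decide (i = k)) = true → k = j := by
    intro k hk
    by_contra hkj
    have hmeet := hm (fun i => decide (i = j)) (fun i => decide (i = k))
    have : (fun i => decide (i = j) && decide (i = k)) = fun _ : Fin m => false := by
      funext i
      by_cases hij : i = j
      · subst hij; simp [Ne.symm hkj]
      · simp [hij]
    rw [this, hb, hje, hk] at hmeet
    simp at hmeet
  left
  refine ⟨j, funext fun x => ?_⟩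
  have hx : h x = true ↔ x j = true := by
    conv_lhs => rw [← rep x]
    rw [key]
    constructor
    · rintro ⟨k, hk1, hk2⟩
      have := huniq k hk2
      subst this
      simpa using hk1
    · intro hxj
      exact ⟨j, by simpa using hxj, hje⟩
  cases hxj : x j
  · rw [hxj] at hx
    cases hhx : h x
    · rfl
    · exact absurd (hx.1 hhx) (by simp)
  · exact hx.2 hxj ▸ rfl

lemma linj_of_hom {m n : ℕ} (f : Fin n → Fin m ⊕ Fin 2)
    (hg : IsGraphHom (CubeE m) (CubeE n) (Phi f)) : LInj f := by
  intro a₁ a₂ b h₁ h₂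
  have hedge : CubeE m (fun _ => false) (fun i => decide (i = b)) := by
    refine Or.inr ⟨b, rfl, by simp, fun j hj => by simp [hj]⟩
  have := hg _ _ hedge
  have hv : ∀ a, f a = Sum.inl b →
      Phi f (fun _ => false) a = false ∧ Phi f (fun i => decide (i = b)) a = true := by
    intro a ha
    constructor <;> simp [Phi, ha]
  obtain ⟨e₁, e₁'⟩ := hv a₁ h₁
  obtain ⟨e₂, e₂'⟩ := hv a₂ h₂
  rcases this with heq | ⟨k, _, _, hk⟩
  · rw [congrFun heq a₁, e₁'] at e₁; exact absurd e₁ (by simp)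
  · have k₁ : a₁ = k := by
      by_contra hc
      rw [hk a₁ hc, e₁'] at e₁; exact absurd e₁ (by simp)
    have k₂ : a₂ = k := by
      by_contra hc
      rw [hk a₂ hc, e₂'] at e₂; exact absurd e₂ (by simp)
    rw [k₁, k₂]

lemma phi_props {m n : ℕ} (f : Fin n → Fin m ⊕ Fin 2) (hf : LInj f) :
    IsGraphHom (CubeE m) (CubeE n) (Phi f) ∧ PresMeet (Phi f) ∧ PresJoin (Phi f) := by
  refine ⟨?_, ?_, ?_⟩
  · rintro x y (rfl | ⟨i, hxi, hyi, hxy⟩)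
    · exact Or.inl rfl
    by_cases hk : ∃ k, f k = Sum.inl i
    · obtain ⟨k, hk⟩ := hk
      refine Or.inr ⟨k, ?_, ?_, ?_⟩
      · simp [Phi, hk, hxi]
      · simp [Phi, hk, hyi]
      · intro l hl
        simp only [Phi]
        cases hfl : f l with
        | inl j =>
          have hji : j ≠ i := by
            rintro rfl
            exact hl (hf l k j hfl (by rwa [← hfl] at hk ▸ hk))
          simp [hxy j hji]
        | inr c => simp
    · left
      funext l
      simp only [Phi]
      cases hfl : f l with
      | inl j =>
        have hji : j ≠ i := fun h => hk ⟨l, h ▸ hfl⟩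
        simp [hxy j hji]
      | inr c => simp
  · intro x y
    funext i
    simp only [Phi]
    cases f i with
    | inl j => simp
    | inr c => simp
  · intro x y
    funext i
    simp only [Phi]
    cases f i with
    | inl j => simp
    | inr c => simp

theorem stmt1 (m n : ℕ) :
    Nonempty ({f : Fin n → Fin m ⊕ Fin 2 // LInj f} ≃
      {g : (Fin m → Bool) → (Fin n → Bool) //
        IsGraphHom (CubeE m) (CubeE n) g ∧ PresMeet g ∧ PresJoin g}) := by
  refine ⟨Equiv.ofBijective (fun f => ⟨Phi f.1, phi_props f.1 f.2⟩) ⟨?_, ?_⟩⟩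
  · -- injective
    rintro ⟨f, hf⟩ ⟨f', hf'⟩ h
    have h : Phi f = Phi f' := congrArg Subtype.val h
    refine Subtype.ext (funext fun i => ?_)
    show f i = f' i
    have hev : ∀ x, Sum.elim x bitOf (f i) = Sum.elim x bitOf (f' i) := by
      intro x; exact congrFun (congrFun h x) i
    cases hfi : f i with
    | inl j =>
      cases hfi' : f' i with
      | inl j' =>
        have := hev (fun k => decide (k = j))
        rw [hfi, hfi'] at this
        simp only [Sum.elim_inl] at this
        have hj' : j' = j := by simpa using this.symm
        rw [hj']
      | inr c =>
        exfalso
        have h1 := hev (fun _ => false)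
        have h2 := hev (fun _ => true)
        rw [hfi, hfi'] at h1
        rw [hfi, hfi'] at h2
        simp only [Sum.elim_inl, Sum.elim_inr] at h1 h2
        rw [← h1] at h2
        exact absurd h2 (by simp)
    | inr c =>
      cases hfi' : f' i with
      | inl j' =>
        exfalso
        have h1 := hev (fun _ => false)
        have h2 := hev (fun _ => true)
        rw [hfi, hfi'] at h1
        rw [hfi, hfi'] at h2
        simp only [Sum.elim_inl, Sum.elim_inr] at h1 h2
        rw [h1] at h2
        exact absurd h2 (by simp)
      | inr c' =>
        have h1 := hev (fun _ => false)
        rw [hfi, hfi'] at h1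
        simp only [Sum.elim_inr] at h1
        rw [bitOf_inj h1]
  · -- surjective
    rintro ⟨g, hhom, hm, hj⟩
    have hcl : ∀ i, (∃ j, (fun x => g x i) = fun x => x j) ∨
        (∃ c : Bool, (fun x => g x i) = fun _ => c) := by
      intro i
      exact classify (fun x => g x i)
        (fun x y => congrFun (hm x y) i) (fun x y => congrFun (hj x y) i)
    classical
    set f : Fin n → Fin m ⊕ Fin 2 := fun i =>
      if hp : ∃ j, (fun x => g x i) = fun x => x j then Sum.inl hp.choose
      else Sum.inr (if g (fun _ => true) i = true then 1 else 0) with hfdef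
    have hPhi : Phi f = g := by
      funext x i
      simp only [Phi, hfdef]
      by_cases hp : ∃ j, (fun x => g x i) = fun x => x j
      · rw [dif_pos hp]
        simp only [Sum.elim_inl]
        exact (congrFun hp.choose_spec x).symm
      · rw [dif_neg hp]
        simp only [Sum.elim_inr]
        obtain ⟨c, hc⟩ := (hcl i).resolve_left hp
        have hgc : ∀ y, g y i = c := fun y => congrFun hc y
        rw [hgc x, hgc (fun _ => true)]
        cases c <;> simp [bitOf]
    refine ⟨⟨f, ?_⟩, Subtype.ext hPhi⟩
    exact linj_of_hom f (hPhi ▸ hhom)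
end

section
/- For all natural numbers n and m, the map that sends a join-preserving graph morphism g from the standard n-cube to the standard m-cube to its restriction g ∘ ι along the inclusion ι of B_n into the standard n-cube is a bijection onto the set of all graph morphisms from B_n to the standard m-cube. Moreover, such a g preserves pointwise meets if and only if g ∘ ι preserves pointwise meets (where B_n is closed under pointwise meet, so meets of B_n vertices are computed pointwise). -/
/-- The vertices of `B n`: the origin together with the base vectors, i.e.
vertices taking the value `true` at most once. -/
def BV (n : ℕ) : Type :=
  {v : Fin n → Bool // ∀ i j, v i = true → v j = true → i = j}

/-- `BV n` is closed under pointwise meets. -/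
def BVmeet {n : ℕ} (u v : BV n) : BV n :=
  ⟨fun i => u.val i && v.val i, fun i j hi hj =>
    u.2 i j (by simp_all) (by simp_all)⟩

namespace S2
variable {n m : ℕ}

def ee (n : ℕ) (i : Fin n) : Fin n → Bool := fun j => decide (j = i)

def zer (n : ℕ) : Fin n → Bool := fun _ => false

lemma cubeE_zero_ee (i : Fin n) : CubeE n (zer n) (ee n i) :=
  Or.inr ⟨i, rfl, by simp [ee], fun j hj => by simp [zer, ee, hj]⟩

lemma cubeE_le {a b : Fin m → Bool} (h : CubeE m a b) : ∀ k, a k = true → b k = true := by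
  rcases h with rfl | ⟨i, hi1, hi2, hi3⟩
  · exact fun k h => h
  · intro k hk
    by_cases hki : k = i
    · subst hki; rw [hi1] at hk; exact absurd hk (by simp)
    · rw [← hi3 k hki]; exact hk

lemma cubeE_or_ee (x : Fin m → Bool) (i : Fin m) :
    CubeE m x (fun j => x j || ee m i j) := by
  by_cases hx : x i = true
  · left; funext j
    by_cases hj : j = i
    · subst hj; simp [ee, hx]
    · simp [ee, hj]
  · right
    exact ⟨i, by simpa using hx, by simp [ee], fun j hj => by simp [ee, hj]⟩

lemma cubeE_iff {a b : Fin m → Bool} :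
    CubeE m a b ↔ a = b ∨ ∃ i, a i = false ∧ b = fun j => a j || ee m i j := by
  constructor
  · rintro (rfl | ⟨i, h1, h2, h3⟩)
    · exact Or.inl rfl
    · refine Or.inr ⟨i, h1, funext fun j => ?_⟩
      by_cases hj : j = i
      · subst hj; simp [ee, h1, h2]
      · simp [ee, hj, (h3 j hj).symm]
  · rintro (rfl | ⟨i, h1, rfl⟩)
    · exact Or.inl rfl
    · exact cubeE_or_ee a i

lemma repr {g : (Fin n → Bool) → (Fin m → Bool)} (hg : PresJoin g) (x : Fin n → Bool) :
    g x = fun k => g (zer n) k || decide (∃ i, x i = true ∧ g (ee n i) k = true) := by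
  suffices H : ∀ (N : ℕ) (x : Fin n → Bool),
      (Finset.univ.filter (fun i => x i = true)).card ≤ N →
      g x = fun k => g (zer n) k || decide (∃ i, x i = true ∧ g (ee n i) k = true) from
    H _ x le_rfl
  intro N
  induction N with
  | zero =>
    intro x hx
    have hz : ∀ i, x i = false := by
      intro i
      by_contra hc
      have hmem : i ∈ Finset.univ.filter (fun i => x i = true) := by
        simp [Bool.not_eq_false] at hc
        simp [hc]
      have := Finset.card_pos.mpr ⟨i, hmem⟩
      omega
    have : x = zer n := funext hz
    subst this
    funext k
    simp [zer]
  | succ N ih =>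
    intro x hx
    by_cases hz : ∀ i, x i = false
    · have : x = zer n := funext hz
      subst this
      funext k
      simp [zer]
    · push_neg at hz
      obtain ⟨i, hi⟩ := hz
      have hi : x i = true := by simpa using hi
      have hxeq : x = fun j => (fun j => x j && !(ee n i j)) j || ee n i j := by
        funext j
        by_cases hj : j = i
        · subst hj; simp [ee, hi]
        · simp [ee, hj]
      have hcard : (Finset.univ.filter (fun j => (x j && !(ee n i j)) = true)).card ≤ N := by
        have hsub : Finset.univ.filter (fun j => (x j && !(ee n i j)) = true) ⊆
            (Finset.univ.filter (fun j => x j = true)).erase i := by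
          intro j hj
          simp only [Finset.mem_filter, Finset.mem_univ, true_and, Bool.and_eq_true,
            Bool.not_eq_true', decide_eq_false_iff_not, ee] at hj
          simp [Finset.mem_erase, hj.1, hj.2]
        have h1 := Finset.card_le_card hsub
        have h2 : i ∈ Finset.univ.filter (fun j => x j = true) := by simp [hi]
        have h3 := Finset.card_erase_of_mem h2
        omega
      have h1 : g x = fun k => g (fun j => x j && !(ee n i j)) k || g (ee n i) k := by
        conv_lhs => rw [hxeq]
        exact hg _ _
      rw [h1, ih _ hcard]
      funext k
      rw [Bool.eq_iff_iff]
      simp only [Bool.or_eq_true, decide_eq_true_eq, Bool.and_eq_true,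
        Bool.not_eq_true', decide_eq_false_iff_not, ee]
      constructor
      · rintro ((h0 | ⟨j, ⟨hj, _⟩, hjk⟩) | hik)
        · exact Or.inl h0
        · exact Or.inr ⟨j, hj, hjk⟩
        · exact Or.inr ⟨i, hi, hik⟩
      · rintro (h0 | ⟨j, hj, hjk⟩)
        · exact Or.inl (Or.inl h0)
        · by_cases hji : j = i
          · subst hji; exact Or.inr hjk
          · exact Or.inl (Or.inr ⟨j, ⟨hj, hji⟩, hjk⟩)

end S2

namespace S2
variable {n m : ℕ}

def bz (n : ℕ) : BV n := ⟨zer n, fun i j hi _ => absurd hi (by simp [zer])⟩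

def bu (n : ℕ) (i : Fin n) : BV n := ⟨ee n i, fun a b ha hb => by
  simp [ee] at ha hb; rw [ha, hb]⟩

lemma bv_cases (v : BV n) : v = bz n ∨ ∃ i, v = bu n i := by
  by_cases h : ∀ i, v.val i = false
  · exact Or.inl (Subtype.ext (funext fun i => h i))
  · right
    push_neg at h
    obtain ⟨i, hi⟩ := h
    have hi : v.val i = true := by simpa using hi
    refine ⟨i, Subtype.ext (funext fun j => ?_)⟩
    by_cases hj : j = i
    · subst hj; simp [bu, ee, hi]
    · have hv : v.val j = false := by
        by_contra hc
        exact hj (v.2 j i (by simpa using hc) hi)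
      simp [hv, bu, ee, hj]

def Gdef (o : Fin m → Bool) (hb : Fin n → Fin m → Bool) : (Fin n → Bool) → Fin m → Bool :=
  fun x k => o k || decide (∃ i, x i = true ∧ hb i k = true)

variable {o : Fin m → Bool} {hb : Fin n → Fin m → Bool}

lemma Gdef_zer : Gdef o hb (zer n) = o := by
  funext k; simp [Gdef, zer]

lemma Gdef_ee (hle : ∀ i k, o k = true → hb i k = true) (i : Fin n) :
    Gdef o hb (ee n i) = hb i := by
  funext k
  rw [Bool.eq_iff_iff]
  simp only [Gdef, Bool.or_eq_true, decide_eq_true_eq, ee]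
  constructor
  · rintro (h0 | ⟨j, hj, hjk⟩)
    · exact hle i k h0
    · rwa [show j = i by simpa using hj] at hjk
  · intro h
    exact Or.inr ⟨i, by simp, h⟩

lemma Gdef_join : PresJoin (Gdef o hb) := by
  intro x y
  funext k
  rw [Bool.eq_iff_iff]
  simp only [Gdef, Bool.or_eq_true, decide_eq_true_eq]
  constructor
  · rintro (h0 | ⟨j, hj, hjk⟩)
    · exact Or.inl (Or.inl h0)
    · rcases hj with hj | hj
      · exact Or.inl (Or.inr ⟨j, hj, hjk⟩)
      · exact Or.inr (Or.inr ⟨j, hj, hjk⟩)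
  · rintro ((h0 | ⟨j, hj, hjk⟩) | (h0 | ⟨j, hj, hjk⟩))
    · exact Or.inl h0
    · exact Or.inr ⟨j, Or.inl hj, hjk⟩
    · exact Or.inl h0
    · exact Or.inr ⟨j, Or.inr hj, hjk⟩

lemma Gdef_or (i : Fin n) (x : Fin n → Bool) :
    Gdef o hb (fun j => x j || ee n i j) = fun k => Gdef o hb x k || hb i k := by
  funext k
  rw [Bool.eq_iff_iff]
  simp only [Gdef, Bool.or_eq_true, decide_eq_true_eq, ee]
  constructor
  · rintro (h0 | ⟨j, hj | hj, hjk⟩)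
    · exact Or.inl (Or.inl h0)
    · exact Or.inl (Or.inr ⟨j, hj, hjk⟩)
    · exact Or.inr (by rwa [show j = i by simpa using hj] at hjk)
  · rintro ((h0 | ⟨j, hj, hjk⟩) | h)
    · exact Or.inl h0
    · exact Or.inr ⟨j, Or.inl hj, hjk⟩
    · exact Or.inr ⟨i, Or.inr (by simp), h⟩

lemma Gdef_hom (hedge : ∀ i, CubeE m o (hb i)) :
    IsGraphHom (CubeE n) (CubeE m) (Gdef o hb) := by
  intro x y hxy
  rcases cubeE_iff.mp hxy with rfl | ⟨i, hxi, rfl⟩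
  · exact Or.inl rfl
  · rw [Gdef_or]
    rcases cubeE_iff.mp (hedge i) with heq | ⟨k0, hk0, heq⟩
    · left
      funext k
      cases hbik : hb i k with
      | false => simp [hbik]
      | true =>
        have hok : o k = true := by rw [heq]; exact hbik
        have : Gdef o hb x k = true := by simp [Gdef, hok]
        simp [this, hbik]
    · have hrw : (fun k => Gdef o hb x k || hb i k) =
          fun k => Gdef o hb x k || ee m k0 k := by
        funext k
        rw [heq]
        cases hok : o k with
        | false => simp [hok]
        | true =>
          have : Gdef o hb x k = true := by simp [Gdef, hok]
          simp [this]
      rw [hrw]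
      exact cubeE_or_ee _ k0

end S2


theorem stmt2 (n m : ℕ) :
    Function.Bijective
      (fun g : {g : (Fin n → Bool) → (Fin m → Bool) //
            IsGraphHom (CubeE n) (CubeE m) g ∧ PresJoin g} =>
        (⟨fun v => g.val v.val, fun u v h => g.2.1 u.val v.val h⟩ :
          {h : BV n → (Fin m → Bool) //
            ∀ u v : BV n, CubeE n u.val v.val → CubeE m (h u) (h v)}))
    ∧
    (∀ g : {g : (Fin n → Bool) → (Fin m → Bool) //
          IsGraphHom (CubeE n) (CubeE m) g ∧ PresJoin g},
      PresMeet g.val ↔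
        ∀ u v : BV n,
          g.val (BVmeet u v).val = fun i => g.val u.val i && g.val v.val i) := by
  constructor
  · constructor
    · rintro ⟨g1, hg1, hj1⟩ ⟨g2, hg2, hj2⟩ heq
      have hfun := congrArg Subtype.val heq
      have h0 : g1 (S2.zer n) = g2 (S2.zer n) := congrFun hfun (S2.bz n)
      have he : ∀ i, g1 (S2.ee n i) = g2 (S2.ee n i) := fun i => congrFun hfun (S2.bu n i)
      apply Subtype.ext
      funext x
      show g1 x = g2 x
      rw [S2.repr hj1 x, S2.repr hj2 x]
      simp only [h0, he]
    · rintro ⟨h, hh⟩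
      refine ⟨⟨S2.Gdef (h (S2.bz n)) (fun i => h (S2.bu n i)),
        S2.Gdef_hom (fun i => hh _ _ (S2.cubeE_zero_ee i)), S2.Gdef_join⟩, ?_⟩
      apply Subtype.ext
      funext v
      rcases S2.bv_cases v with rfl | ⟨i, rfl⟩
      · exact S2.Gdef_zer
      · exact S2.Gdef_ee (fun i k => S2.cubeE_le (hh _ _ (S2.cubeE_zero_ee i)) k) i
  · rintro ⟨g, hg, hj⟩
    constructor
    · intro hm u v
      exact hm u.val v.val
    · intro hm x y
      have hmz : ∀ (k : Fin m) (i j : Fin n), i ≠ j → g (S2.ee n i) k = true →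
          g (S2.ee n j) k = true → g (S2.zer n) k = true := by
        intro k i j hij h1 h2
        have hmeet : g ((BVmeet (S2.bu n i) (S2.bu n j)).val) =
            fun k => g (S2.ee n i) k && g (S2.ee n j) k := hm (S2.bu n i) (S2.bu n j)
        have hval : (BVmeet (S2.bu n i) (S2.bu n j)).val = S2.zer n := by
          funext a
          simp only [BVmeet, S2.bu, S2.ee, S2.zer]
          by_cases ha : a = i
          · subst ha
            simp [fun hh : a = j => hij hh]
          · simp [ha]
        rw [hval] at hmeet
        rw [hmeet]
        simp [h1, h2]
      have Rx := S2.repr hj x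
      have Ry := S2.repr hj y
      have Rxy := S2.repr hj (fun i => x i && y i)
      funext k
      show g (fun i => x i && y i) k = (g x k && g y k)
      rw [Rxy, Rx, Ry]
      simp only []
      rw [Bool.eq_iff_iff]
      simp only [Bool.or_eq_true, Bool.and_eq_true, decide_eq_true_eq]
      constructor
      · rintro (h0 | ⟨a, ⟨hxa, hya⟩, hak⟩)
        · exact ⟨Or.inl h0, Or.inl h0⟩
        · exact ⟨Or.inr ⟨a, hxa, hak⟩, Or.inr ⟨a, hya, hak⟩⟩
      · rintro ⟨h0 | ⟨a, hxa, hak⟩, h0' | ⟨b, hyb, hbk⟩⟩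
        · exact Or.inl h0
        · exact Or.inl h0
        · exact Or.inl h0'
        · by_cases hab : a = b
          · subst hab
            exact Or.inr ⟨a, ⟨hxa, hyb⟩, hak⟩
          · exact Or.inl (hmz k a b hab hak hbk)
end

section
/- For all natural numbers m and n, there is a bijection between the set of functions f : Fin n → Fin m ⊕ Fin 2 that are injective on the left part and the set of dimension-preserving graph morphisms from the standard m-cube to the standard n-cube. -/
/-- The pair (x, y) is a non-loop edge flipping exactly coordinate i. -/
def Flips {n : ℕ} (x y : Fin n → Bool) (i : Fin n) : Prop :=
  x i ≠ y i ∧ ∀ j, j ≠ i → x j = y j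

/-- A map between cube vertex sets is dimension-preserving. -/
def DimPres {m n : ℕ} (g : (Fin m → Bool) → (Fin n → Bool)) : Prop :=
  ∀ x₁ y₁ x₂ y₂ (i : Fin m), Flips x₁ y₁ i → Flips x₂ y₂ i →
    (g x₁ = g y₁ ∧ g x₂ = g y₂) ∨
    ∃ j : Fin n, Flips (g x₁) (g y₁) j ∧ Flips (g x₂) (g y₂) j

/-- The forward map: from a labelling `f` build a map of cube vertices. -/
def fwd {m n : ℕ} (f : Fin n → Fin m ⊕ Fin 2) : (Fin m → Bool) → (Fin n → Bool) :=
  fun x j => Sum.elim x (fun c => decide (c = 1)) (f j)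

lemma flips_unique {n : ℕ} {a b : Fin n → Bool} {j j' : Fin n}
    (h : Flips a b j) (h' : Flips a b j') : j = j' := by
  by_contra hne
  exact h'.1 (h.2 j' (Ne.symm hne))

lemma flips_dir {n : ℕ} {a b : Fin n → Bool} {j : Fin n}
    (he : CubeE n a b) (hf : Flips a b j) : a j = false ∧ b j = true := by
  rcases he with h | ⟨i, hi1, hi2, hi3⟩
  · exact absurd (congrFun h j) hf.1
  · have hij : i = j := by
      by_contra hne
      rw [hf.2 i hne, hi2] at hi1
      exact Bool.noConfusion hi1
    subst hij; exact ⟨hi1, hi2⟩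

lemma edge_update {m : ℕ} (x : Fin m → Bool) (i : Fin m) :
    CubeE m (Function.update x i false) (Function.update x i true) :=
  Or.inr ⟨i, by simp, by simp, fun j hj => by simp [Function.update_of_ne hj]⟩

lemma flips_update {m : ℕ} (x : Fin m → Bool) (i : Fin m) :
    Flips (Function.update x i false) (Function.update x i true) i :=
  ⟨by simp, fun j hj => by simp [Function.update_of_ne hj]⟩

lemma fwd_flips {m n : ℕ} {f : Fin n → Fin m ⊕ Fin 2} (hf : LInj f) {x y : Fin m → Bool}
    {i : Fin m} (h : Flips x y i) {j₀ : Fin n} (hj₀ : f j₀ = Sum.inl i) :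
    Flips (fwd f x) (fwd f y) j₀ := by
  constructor
  · simpa [fwd, hj₀] using h.1
  · intro j hjne
    unfold fwd
    cases hfj : f j with
    | inl i' =>
      have hne : i' ≠ i := fun hh => hjne (hf j j₀ i (hh ▸ hfj) hj₀)
      simp [h.2 i' hne]
    | inr c => simp

lemma fwd_const {m n : ℕ} {f : Fin n → Fin m ⊕ Fin 2} {i : Fin m}
    (hj : ¬ ∃ j, f j = Sum.inl i) {x y : Fin m → Bool} (h : Flips x y i) :
    fwd f x = fwd f y := by
  funext j
  unfold fwd
  cases hfj : f j with
  | inl i' =>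
    have hne : i' ≠ i := fun hh => hj ⟨j, hh ▸ hfj⟩
    simp [h.2 i' hne]
  | inr c => simp

lemma fwd_hom {m n : ℕ} (f : Fin n → Fin m ⊕ Fin 2) (hf : LInj f) :
    IsGraphHom (CubeE m) (CubeE n) (fwd f) := by
  intro x y hxy
  rcases hxy with rfl | ⟨i, hx, hy, hoff⟩
  · exact Or.inl rfl
  · have hfl : Flips x y i := ⟨by rw [hx, hy]; simp, hoff⟩
    by_cases hj : ∃ j, f j = Sum.inl i
    · obtain ⟨j₀, hj₀⟩ := hj
      have hF := fwd_flips hf hfl hj₀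
      refine Or.inr ⟨j₀, ?_, ?_, hF.2⟩
      · simp [fwd, hj₀, hx]
      · simp [fwd, hj₀, hy]
    · exact Or.inl (fwd_const hj hfl)

lemma fwd_dp {m n : ℕ} (f : Fin n → Fin m ⊕ Fin 2) (hf : LInj f) : DimPres (fwd f) := by
  intro x₁ y₁ x₂ y₂ i h1 h2
  by_cases hj : ∃ j, f j = Sum.inl i
  · obtain ⟨j₀, hj₀⟩ := hj
    exact Or.inr ⟨j₀, fwd_flips hf h1 hj₀, fwd_flips hf h2 hj₀⟩
  · exact Or.inl ⟨fwd_const hj h1, fwd_const hj h2⟩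

lemma fwd_inj {m n : ℕ} {f f' : Fin n → Fin m ⊕ Fin 2} (hff : fwd f = fwd f') : f = f' := by
  funext j
  have h : ∀ x, fwd f x j = fwd f' x j := fun x => congrFun (congrFun hff x) j
  cases hfj : f j with
  | inl i =>
    cases hfj' : f' j with
    | inl i' =>
      have hx := h (fun k => decide (k = i))
      simp [fwd, hfj, hfj'] at hx
      rw [hx]
    | inr c =>
      have h0 := h (fun _ => false)
      have h1 := h (fun _ => true)
      simp [fwd, hfj, hfj'] at h0 h1
      exact absurd h1 h0
  | inr c =>
    cases hfj' : f' j with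
    | inl i' =>
      have h0 := h (fun _ => false)
      have h1 := h (fun _ => true)
      simp [fwd, hfj, hfj'] at h0 h1
      exact absurd h1 h0
    | inr c' =>
      have h0 := h (fun _ => false)
      simp [fwd, hfj, hfj'] at h0
      have hcc : c = c' := by fin_cases c <;> fin_cases c' <;> simp_all
      rw [hcc]

/-- Dimension `i` flips output coordinate `j` on every basic edge. -/
def FlipsTo {m n : ℕ} (g : (Fin m → Bool) → (Fin n → Bool)) (i : Fin m) (j : Fin n) : Prop :=
  ∀ x, Flips (g (Function.update x i false)) (g (Function.update x i true)) j

lemma collapse_or_flips {m n : ℕ} {g : (Fin m → Bool) → (Fin n → Bool)} (hDP : DimPres g)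
    (i : Fin m) :
    (∀ x, g (Function.update x i false) = g (Function.update x i true)) ∨ ∃ j, FlipsTo g i j := by
  set x₀ : Fin m → Bool := fun _ => false with hx₀
  rcases hDP _ _ _ _ i (flips_update x₀ i) (flips_update x₀ i) with ⟨h0, -⟩ | ⟨j, hj, -⟩
  · left; intro x
    rcases hDP _ _ _ _ i (flips_update x₀ i) (flips_update x i) with ⟨-, hx⟩ | ⟨j, hj, -⟩
    · exact hx
    · exact absurd (congrFun h0 j) hj.1
  · right
    refine ⟨j, fun x => ?_⟩
    rcases hDP _ _ _ _ i (flips_update x₀ i) (flips_update x i) with ⟨h0', -⟩ | ⟨j', hj', hx⟩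
    · exact absurd (congrFun h0' j) hj.1
    · rwa [flips_unique hj' hj] at hx

lemma flipsTo_eval {m n : ℕ} {g : (Fin m → Bool) → (Fin n → Bool)}
    (hHom : IsGraphHom (CubeE m) (CubeE n) g) {i : Fin m} {j : Fin n}
    (h : FlipsTo g i j) : ∀ x, g x j = x i := by
  intro x
  have hd := flips_dir (hHom _ _ (edge_update x i)) (h x)
  cases hxi : x i with
  | false =>
    have hx : Function.update x i false = x := by rw [← hxi]; exact Function.update_eq_self i x
    rw [← hx]; exact hd.1
  | true =>
    have hx : Function.update x i true = x := by rw [← hxi]; exact Function.update_eq_self i x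
    rw [← hx]; exact hd.2

lemma inactive_const {m n : ℕ} {g : (Fin m → Bool) → (Fin n → Bool)}
    (hHom : IsGraphHom (CubeE m) (CubeE n) g) (hDP : DimPres g) {j : Fin n}
    (hj : ¬ ∃ i, FlipsTo g i j) :
    ∀ x, g x j = g (fun _ => false) j := by
  suffices H : ∀ k (x : Fin m → Bool), (Finset.univ.filter fun i => x i = true).card = k →
      g x j = g (fun _ => false) j from fun x => H _ x rfl
  intro k
  induction k using Nat.strong_induction_on with
  | _ k ih =>
    intro x hk
    by_cases hx : ∀ i, x i = false
    · have : x = fun _ => false := funext hx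
      rw [this]
    · push_neg at hx
      obtain ⟨i, hi⟩ := hx
      have hxi : x i = true := by
        cases hxx : x i
        · exact absurd hxx hi
        · rfl
      have hxeq : Function.update x i true = x := by
        rw [← hxi]; exact Function.update_eq_self i x
      have hset : (Finset.univ.filter fun a => Function.update x i false a = true) =
          (Finset.univ.filter fun a => x a = true).erase i := by
        ext a
        by_cases ha : a = i
        · subst ha; simp
        · simp [Function.update_of_ne ha, ha]
      have hcard' : (Finset.univ.filter fun a => Function.update x i false a = true).card < k := by
        rw [hset, ← hk]
        exact Finset.card_erase_lt_of_mem (by simp [hxi])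
      have IH := ih _ hcard' (Function.update x i false) rfl
      rcases collapse_or_flips hDP i with hc | ⟨j', hj'⟩
      · have hgc := hc x
        rw [hxeq] at hgc
        rw [← hgc]; exact IH
      · have hjj : j' ≠ j := fun hh => hj ⟨i, hh ▸ hj'⟩
        have hcoord := (hj' x).2 j (Ne.symm hjj)
        rw [hxeq] at hcoord
        rw [← hcoord]; exact IH

theorem stmt4 (m n : ℕ) :
    Nonempty ({f : Fin n → Fin m ⊕ Fin 2 // LInj f} ≃
      {g : (Fin m → Bool) → (Fin n → Bool) //
        IsGraphHom (CubeE m) (CubeE n) g ∧ DimPres g}) := by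
  classical
  refine ⟨Equiv.ofBijective (fun f => ⟨fwd f.1, fwd_hom f.1 f.2, fwd_dp f.1 f.2⟩) ⟨?_, ?_⟩⟩
  · intro f f' h
    exact Subtype.ext (fwd_inj (congrArg Subtype.val h))
  · rintro ⟨g, hHom, hDP⟩
    set f : Fin n → Fin m ⊕ Fin 2 := fun j =>
      if h : ∃ i, FlipsTo g i j then Sum.inl h.choose
      else Sum.inr (if g (fun _ => false) j then 1 else 0) with hfdef
    have hLInj : LInj f := by
      intro j₁ j₂ i h₁ h₂
      simp only [hfdef] at h₁ h₂
      split at h₁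
      case isTrue h =>
        split at h₂
        case isTrue h' =>
          have e₁ : h.choose = i := Sum.inl.inj h₁
          have e₂ : h'.choose = i := Sum.inl.inj h₂
          have s₁ : FlipsTo g i j₁ := e₁ ▸ h.choose_spec
          have s₂ : FlipsTo g i j₂ := e₂ ▸ h'.choose_spec
          exact flips_unique (s₁ (fun _ => false)) (s₂ (fun _ => false))
        case isFalse => exact absurd h₂ (by simp)
      case isFalse => exact absurd h₁ (by simp)
    refine ⟨⟨f, hLInj⟩, Subtype.ext ?_⟩
    funext x j
    show fwd f x j = g x j
    by_cases h : ∃ i, FlipsTo g i j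
    · have hf : f j = Sum.inl h.choose := by simp [hfdef, h]
      rw [flipsTo_eval hHom h.choose_spec x]
      simp [fwd, hf]
    · have hf : f j = Sum.inr (if g (fun _ => false) j then 1 else 0) := by simp [hfdef, h]
      rw [inactive_const hHom hDP h x]
      cases hg : g (fun _ => false) j <;> simp [fwd, hf, hg]
end

section
/- For every natural number n and all vertices x, y : Fin (n+1) → Bool, the twisted-cube edge relation T_{n+1} x y holds if and only if one of the following holds: (i) x = y; (ii) x 0 = y 0 = false and T_n (y ∘ Fin.succ) (x ∘ Fin.succ); (iii) x 0 = y 0 = true and T_n (x ∘ Fin.succ) (y ∘ Fin.succ); (iv) x 0 = false, y 0 = true, and x ∘ Fin.succ = y ∘ Fin.succ. (This states that the non-recursive parity definition of the twisted cube agrees with the recursive 'twisted iteration' definition, where the new dimension is dimension 0, the copy with first bit false has all edges reversed, the copy with first bit true is unchanged, and connecting edges go from first bit false to first bit true.) -/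
/-- Edge relation of the twisted n-cube. -/
def TwE (n : ℕ) (x y : Fin n → Bool) : Prop :=
  x = y ∨ ∃ i : Fin n, (∀ j, j ≠ i → x j = y j) ∧ y i = !(x i) ∧
    (x i = true ↔ Odd (Finset.univ.filter (fun j : Fin n => j < i ∧ x j = false)).card)

lemma card_succ_aux (n : ℕ) (x : Fin (n+1) → Bool) (i : Fin n) :
    (Finset.univ.filter (fun j : Fin (n+1) => j < i.succ ∧ x j = false)).card
    = (if x 0 = false then 1 else 0)
      + (Finset.univ.filter (fun j : Fin n => j < i ∧ x j.succ = false)).card := by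
  rw [Finset.card_filter, Finset.card_filter, Fin.sum_univ_succ]
  simp [Fin.succ_pos, Fin.succ_lt_succ_iff]

lemma filter_congr_below {n : ℕ} (i : Fin n) (a b : Fin n → Bool)
    (h : ∀ j, j ≠ i → a j = b j) :
    (Finset.univ.filter (fun j => j < i ∧ a j = false))
      = (Finset.univ.filter (fun j => j < i ∧ b j = false)) := by
  apply Finset.filter_congr
  intro j _
  by_cases hj : j < i
  · simp [hj, h j (ne_of_lt hj)]
  · simp [hj]

theorem stmt5 (n : ℕ) (x y : Fin (n + 1) → Bool) :
    TwE (n + 1) x y ↔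
      x = y ∨
      (x 0 = false ∧ y 0 = false ∧ TwE n (y ∘ Fin.succ) (x ∘ Fin.succ)) ∨
      (x 0 = true ∧ y 0 = true ∧ TwE n (x ∘ Fin.succ) (y ∘ Fin.succ)) ∨
      (x 0 = false ∧ y 0 = true ∧ x ∘ Fin.succ = y ∘ Fin.succ) := by
  constructor
  · rintro (rfl | ⟨i, h1, h2, h3⟩)
    · left; rfl
    rcases Fin.eq_zero_or_eq_succ i with rfl | ⟨i', rfl⟩
    · -- i = 0 : case (iv)
      have hc : (Finset.univ.filter
          (fun j : Fin (n+1) => j < 0 ∧ x j = false)).card = 0 := by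
        simp [Fin.not_lt_zero]
      have hx0 : x 0 = false := by
        cases h : x 0
        · rfl
        · exfalso
          have := h3.mp h
          rw [hc] at this
          simp at this
      right; right; right
      refine ⟨hx0, by rw [h2, hx0]; rfl, ?_⟩
      funext j
      exact h1 j.succ (Fin.succ_ne_zero j)
    · -- i = i'.succ
      have hne0 : (0 : Fin (n+1)) ≠ i'.succ := (Fin.succ_ne_zero i').symm
      have hxy0 : x 0 = y 0 := h1 0 hne0
      have hcard := card_succ_aux n x i'
      set c := (Finset.univ.filter (fun j : Fin n => j < i' ∧ x j.succ = false)).card with hc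
      cases hx0 : x 0
      · -- x 0 = false : case (ii)
        rw [hx0, if_pos rfl] at hcard
        right; left
        refine ⟨rfl, hxy0 ▸ hx0, Or.inr ⟨i', ?_, ?_, ?_⟩⟩
        · intro j hj
          exact (h1 j.succ (fun h => hj (Fin.succ_injective n h))).symm
        · simp only [Function.comp_apply]
          rw [h2, Bool.not_not]
        · have hfc : (Finset.univ.filter
              (fun j : Fin n => j < i' ∧ (y ∘ Fin.succ) j = false)) =
              (Finset.univ.filter (fun j : Fin n => j < i' ∧ (x ∘ Fin.succ) j = false)) := by
            apply filter_congr_below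
            intro j hj
            exact (h1 j.succ (fun h => hj (Fin.succ_injective n h))).symm
          rw [hfc]
          have h3' : x i'.succ = true ↔ Odd (1 + c) := by rw [← hcard]; exact h3
          have hodd : Odd (1 + c) ↔ ¬ Odd c := by
            rw [Nat.add_comm, Nat.odd_add_one]
          rw [hodd] at h3'
          simp only [Function.comp_apply]
          rw [h2]
          cases hxs : x i'.succ <;> simp [hxs] at h3' ⊢ <;> tauto
      · -- x 0 = true : case (iii)
        rw [hx0] at hcard
        simp only [if_neg (by simp : ¬ (true = false))] at hcard
        right; right; left
        refine ⟨rfl, hxy0 ▸ hx0, Or.inr ⟨i', ?_, ?_, ?_⟩⟩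
        · intro j hj
          exact h1 j.succ (fun h => hj (Fin.succ_injective n h))
        · exact h2
        · rw [show (Finset.univ.filter
              (fun j : Fin n => j < i' ∧ (x ∘ Fin.succ) j = false)).card = c from rfl]
          rw [← Nat.zero_add c, ← hcard]
          exact h3
  · rintro (rfl | ⟨hx0, hy0, (hEq | ⟨i', h1, h2, h3⟩)⟩ | ⟨hx0, hy0, (hEq | ⟨i', h1, h2, h3⟩)⟩ |
      ⟨hx0, hy0, hEq⟩)
    · left; rfl
    · -- (ii) with equality
      left
      funext j
      rcases Fin.eq_zero_or_eq_succ j with rfl | ⟨j', rfl⟩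
      · rw [hx0, hy0]
      · exact (congrFun hEq j').symm
    · -- (ii) with flip at i'
      right
      refine ⟨i'.succ, ?_, ?_, ?_⟩
      · intro j hj
        rcases Fin.eq_zero_or_eq_succ j with rfl | ⟨j', rfl⟩
        · rw [hx0, hy0]
        · exact (h1 j' (fun h => hj (congrArg Fin.succ h))).symm
      · simp only [Function.comp_apply] at h2
        rw [h2, Bool.not_not]
      · have hcard := card_succ_aux n x i'
        rw [hx0, if_pos rfl] at hcard
        set c := (Finset.univ.filter (fun j : Fin n => j < i' ∧ x j.succ = false)).card with hc
        rw [hcard]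
        have hfc : (Finset.univ.filter
            (fun j : Fin n => j < i' ∧ (y ∘ Fin.succ) j = false)) =
            (Finset.univ.filter (fun j : Fin n => j < i' ∧ (x ∘ Fin.succ) j = false)) := by
          apply filter_congr_below
          intro j hj
          exact h1 j hj
        rw [hfc] at h3
        simp only [Function.comp_apply] at h2 h3
        have hodd : Odd (1 + c) ↔ ¬ Odd c := by
          rw [Nat.add_comm, Nat.odd_add_one]
        rw [hodd, h2]
        cases hys : y i'.succ <;> simp [hys] at h3 ⊢ <;> tauto
    · -- (iii) with equality
      left
      funext j
      rcases Fin.eq_zero_or_eq_succ j with rfl | ⟨j', rfl⟩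
      · rw [hx0, hy0]
      · exact congrFun hEq j'
    · -- (iii) with flip at i'
      right
      refine ⟨i'.succ, ?_, ?_, ?_⟩
      · intro j hj
        rcases Fin.eq_zero_or_eq_succ j with rfl | ⟨j', rfl⟩
        · rw [hx0, hy0]
        · exact h1 j' (fun h => hj (congrArg Fin.succ h))
      · exact h2
      · have hcard := card_succ_aux n x i'
        rw [hx0] at hcard
        simp only [if_neg (by simp : ¬ (true = false))] at hcard
        rw [hcard]
        simpa using h3
    · -- (iv)
      right
      refine ⟨0, ?_, ?_, ?_⟩
      · intro j hj
        rcases Fin.eq_zero_or_eq_succ j with rfl | ⟨j', rfl⟩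
        · exact absurd rfl hj
        · exact congrFun hEq j'
      · rw [hx0, hy0]; rfl
      · simp [Fin.not_lt_zero, hx0]
end

section
/- For every natural number n, there exists a bijection g between Fin n → Bool and Fin (2^n) such that for all vertices x, y : Fin n → Bool, the reflexive-transitive closure of the twisted-cube edge relation T_n relates x to y if and only if g x ≤ g y. In other words, the free preorder generated by the twisted n-cube is isomorphic to the total order on 2^n elements. -/
open Finset

variable {n : ℕ}

/-- Number of `false` entries of `x` with index `< k`. -/
def cnt (x : Fin n → Bool) (k : ℕ) : ℕ :=
  ∑ j : Fin n, if (j : ℕ) < k ∧ x j = false then 1 else 0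

lemma cnt_eq_card (x : Fin n → Bool) (i : Fin n) :
    (Finset.univ.filter (fun j : Fin n => j < i ∧ x j = false)).card = cnt x i := by
  rw [Finset.card_filter]
  rfl

lemma cnt_zero (x : Fin n → Bool) : cnt x 0 = 0 := by simp [cnt]

lemma cnt_succ {k : ℕ} (h : k < n) (x : Fin n → Bool) :
    cnt x (k + 1) = cnt x k + (if x ⟨k, h⟩ = false then 1 else 0) := by
  unfold cnt
  have key : ∀ j : Fin n, (if (j : ℕ) < k + 1 ∧ x j = false then (1 : ℕ) else 0)
      = (if (j : ℕ) < k ∧ x j = false then 1 else 0)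
        + (if j = ⟨k, h⟩ then (if x ⟨k, h⟩ = false then 1 else 0) else 0) := by
    intro j
    by_cases hj : j = ⟨k, h⟩
    · subst hj
      simp only [if_pos rfl]
      by_cases hx : x ⟨k, h⟩ = false <;> simp [hx]
    · have hjk : (j : ℕ) ≠ k := fun hc => hj (Fin.ext hc)
      have : ((j : ℕ) < k + 1) ↔ ((j : ℕ) < k) := by omega
      simp [hj, this]
  rw [Finset.sum_congr rfl fun j _ => key j, Finset.sum_add_distrib,
    Finset.sum_ite_eq' Finset.univ (⟨k, h⟩ : Fin n)]
  simp

lemma cnt_congr {x y : Fin n → Bool} {k : ℕ}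
    (h : ∀ j : Fin n, (j : ℕ) < k → x j = y j) : cnt x k = cnt y k := by
  unfold cnt
  refine Finset.sum_congr rfl fun j _ => ?_
  by_cases hj : (j : ℕ) < k
  · rw [h j hj]
  · simp [hj]

lemma cnt_flip {x y : Fin n → Bool} {i : Fin n}
    (h1 : ∀ j, j ≠ i → x j = y j) (h2 : y i = !(x i)) {k : ℕ} (hk : (i : ℕ) < k) :
    cnt x k % 2 ≠ cnt y k % 2 := by
  unfold cnt
  rw [← Finset.add_sum_erase _ _ (Finset.mem_univ i),
    ← Finset.add_sum_erase _ _ (Finset.mem_univ i)]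
  have hS : ∑ j ∈ Finset.univ.erase i, (if (j : ℕ) < k ∧ x j = false then (1 : ℕ) else 0)
      = ∑ j ∈ Finset.univ.erase i, (if (j : ℕ) < k ∧ y j = false then 1 else 0) := by
    refine Finset.sum_congr rfl fun j hj => ?_
    rw [h1 j (Finset.mem_erase.1 hj).1]
  rw [hS]
  cases hx : x i
  · rw [hx] at h2
    simp only [Bool.not_false] at h2
    rw [h2]
    simp only [hk, true_and]
    norm_num
    omega
  · rw [hx] at h2
    simp only [Bool.not_true] at h2
    rw [h2]
    simp only [hk, true_and]
    norm_num
    omega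

/-- Bit of significance `m` of the rank of `x`. -/
def bt (x : Fin n → Bool) (m : ℕ) : Bool :=
  decide (Even (cnt x (n - m)))

/-- Rank of `x`. -/
def Nv (x : Fin n → Bool) : ℕ :=
  ∑ m ∈ Finset.range n, if bt x m then 2 ^ m else 0

lemma two_pow_sum (t : ℕ) : ∑ m ∈ Finset.range t, 2 ^ m = 2 ^ t - 1 := by
  induction t with
  | zero => simp
  | succ t ih =>
      rw [Finset.sum_range_succ, ih]
      have h1 : 1 ≤ 2 ^ t := Nat.one_le_two_pow
      have h2 : 2 ^ (t + 1) = 2 ^ t * 2 := pow_succ 2 t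
      omega

lemma sval_lt {f g : ℕ → Bool} {m₀ : ℕ} (hm : m₀ < n)
    (hhi : ∀ m, m₀ < m → m < n → f m = g m) (hf : f m₀ = false) (hg : g m₀ = true) :
    (∑ m ∈ Finset.range n, if f m then 2 ^ m else 0)
      < ∑ m ∈ Finset.range n, if g m then 2 ^ m else 0 := by
  have hsplit : ∀ h : ℕ → Bool,
      (∑ m ∈ Finset.range n, if h m then 2 ^ m else 0)
        = (∑ m ∈ Finset.range (m₀ + 1), if h m then 2 ^ m else 0)
          + ∑ m ∈ Finset.Ico (m₀ + 1) n, (if h m then 2 ^ m else 0) := by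
    intro h
    rw [Finset.range_eq_Ico, Finset.range_eq_Ico,
      Finset.sum_Ico_consecutive _ (Nat.zero_le _) (show m₀ + 1 ≤ n from hm)]
  rw [hsplit f, hsplit g]
  have hhieq : ∑ m ∈ Finset.Ico (m₀ + 1) n, (if f m then 2 ^ m else 0)
      = ∑ m ∈ Finset.Ico (m₀ + 1) n, (if g m then 2 ^ m else 0) := by
    refine Finset.sum_congr rfl fun m hmm => ?_
    rw [Finset.mem_Ico] at hmm
    rw [hhi m hmm.1 hmm.2]
  rw [hhieq]
  have hflow : (∑ m ∈ Finset.range (m₀ + 1), if f m then 2 ^ m else 0) ≤ 2 ^ m₀ - 1 := by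
    rw [Finset.sum_range_succ, hf]
    have : (∑ m ∈ Finset.range m₀, if f m then 2 ^ m else 0)
        ≤ ∑ m ∈ Finset.range m₀, 2 ^ m :=
      Finset.sum_le_sum fun m _ => by split <;> simp
    rw [two_pow_sum] at this
    simpa using this
  have hglow : 2 ^ m₀ ≤ ∑ m ∈ Finset.range (m₀ + 1), if g m then 2 ^ m else 0 := by
    rw [Finset.sum_range_succ, hg]
    simp
  have h1 : 1 ≤ 2 ^ m₀ := Nat.one_le_two_pow
  omega

lemma sval_succ {f g : ℕ → Bool} {m₀ : ℕ} (hm : m₀ < n)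
    (hhi : ∀ m, m₀ < m → m < n → f m = g m) (hf : f m₀ = false) (hg : g m₀ = true)
    (hflo : ∀ m, m < m₀ → f m = true) (hglo : ∀ m, m < m₀ → g m = false) :
    (∑ m ∈ Finset.range n, if g m then 2 ^ m else 0)
      = (∑ m ∈ Finset.range n, if f m then 2 ^ m else 0) + 1 := by
  have hsplit : ∀ h : ℕ → Bool,
      (∑ m ∈ Finset.range n, if h m then 2 ^ m else 0)
        = (∑ m ∈ Finset.range (m₀ + 1), if h m then 2 ^ m else 0)
          + ∑ m ∈ Finset.Ico (m₀ + 1) n, (if h m then 2 ^ m else 0) := by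
    intro h
    rw [Finset.range_eq_Ico, Finset.range_eq_Ico,
      Finset.sum_Ico_consecutive _ (Nat.zero_le _) (show m₀ + 1 ≤ n from hm)]
  rw [hsplit f, hsplit g]
  have hhieq : ∑ m ∈ Finset.Ico (m₀ + 1) n, (if f m then 2 ^ m else 0)
      = ∑ m ∈ Finset.Ico (m₀ + 1) n, (if g m then 2 ^ m else 0) := by
    refine Finset.sum_congr rfl fun m hmm => ?_
    rw [Finset.mem_Ico] at hmm
    rw [hhi m hmm.1 hmm.2]
  rw [hhieq]
  have hflow : (∑ m ∈ Finset.range (m₀ + 1), if f m then 2 ^ m else 0) = 2 ^ m₀ - 1 := by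
    rw [Finset.sum_range_succ, hf]
    have : (∑ m ∈ Finset.range m₀, if f m then 2 ^ m else 0)
        = ∑ m ∈ Finset.range m₀, 2 ^ m :=
      Finset.sum_congr rfl fun m hmm => by rw [hflo m (Finset.mem_range.1 hmm)]; simp
    rw [this, two_pow_sum]
    simp
  have hglow : (∑ m ∈ Finset.range (m₀ + 1), if g m then 2 ^ m else 0) = 2 ^ m₀ := by
    rw [Finset.sum_range_succ, hg]
    have : (∑ m ∈ Finset.range m₀, if g m then 2 ^ m else 0) = 0 := by
      refine Finset.sum_eq_zero fun m hmm => by rw [hglo m (Finset.mem_range.1 hmm)]; simp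
    rw [this]
    simp
  rw [hflow, hglow]
  have h1 : 1 ≤ 2 ^ m₀ := Nat.one_le_two_pow
  omega

/-- Bits above the flipped position are unchanged. -/
lemma bt_hi {x y : Fin n → Bool} {i : Fin n}
    (h1 : ∀ j, j ≠ i → x j = y j) {m : ℕ} (hm : n - 1 - (i : ℕ) < m) (hmn : m < n) :
    bt x m = bt y m := by
  have hi : (i : ℕ) < n := i.isLt
  have hk : n - m ≤ (i : ℕ) := by omega
  unfold bt
  rw [cnt_congr (k := n - m) fun j hj => h1 j (by
    intro hc
    rw [hc] at hj
    omega)]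

/-- Bits at and below the flipped position are flipped. -/
lemma bt_lo {x y : Fin n → Bool} {i : Fin n}
    (h1 : ∀ j, j ≠ i → x j = y j) (h2 : y i = !(x i)) {m : ℕ}
    (hm : m ≤ n - 1 - (i : ℕ)) :
    bt y m = !(bt x m) := by
  have hi : (i : ℕ) < n := i.isLt
  have hk : (i : ℕ) < n - m := by omega
  have hflip := cnt_flip h1 h2 hk
  unfold bt
  rw [← decide_not, decide_eq_decide, Nat.even_iff, Nat.even_iff]
  omega

/-- The twisted-cube edge condition at `i` is equivalent to oddness of `cnt x (i+1)`. -/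
lemma edge_cond_iff (x : Fin n → Bool) (i : Fin n) :
    ((x i = true ↔ Odd (cnt x (i : ℕ)))) ↔ Odd (cnt x ((i : ℕ) + 1)) := by
  have h := cnt_succ i.isLt x
  rw [Fin.eta] at h
  cases hx : x i
  · rw [hx] at h
    simp only [reduceIte] at h
    rw [h]
    simp only [Bool.false_eq_true, false_iff, Nat.odd_iff, Nat.not_odd_iff,
      Nat.odd_iff] at *
    omega
  · rw [hx] at h
    simp only [Bool.true_eq_false, reduceIte, Nat.add_zero] at h
    rw [h]
    simp only [true_iff]

lemma nsub_eq (i : Fin n) : n - (n - 1 - (i : ℕ)) = (i : ℕ) + 1 := by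
  have := i.isLt
  omega

/-- Monotonicity of rank along edges. -/
lemma nv_mono {x y : Fin n → Bool} (h : TwE n x y) : Nv x ≤ Nv y := by
  rcases h with rfl | ⟨i, h1, h2, h3⟩
  · exact le_rfl
  rw [cnt_eq_card, edge_cond_iff] at h3
  set m₀ : ℕ := n - 1 - (i : ℕ) with hm₀
  have hi : (i : ℕ) < n := i.isLt
  have hmn : m₀ < n := by omega
  have hf : bt x m₀ = false := by
    unfold bt
    rw [nsub_eq]
    simp [(Nat.not_even_iff_odd.mpr h3)]
  have hg : bt y m₀ = true := by
    rw [bt_lo h1 h2 (le_refl m₀), hf]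
    rfl
  exact le_of_lt (sval_lt hmn (fun m hm hmn' => bt_hi h1 hm hmn') hf hg)

/-- Rank bits determine the vertex. -/
lemma bt_inj {x y : Fin n → Bool} (h : ∀ m, m < n → bt x m = bt y m) : x = y := by
  have hpar : ∀ k, k ≤ n → cnt x k % 2 = cnt y k % 2 := by
    intro k hk
    rcases Nat.eq_zero_or_pos k with rfl | hk0
    · rw [cnt_zero, cnt_zero]
    · have hmn : n - k < n := by omega
      have := h (n - k) hmn
      unfold bt at this
      have hnk : n - (n - k) = k := by omega
      rw [hnk, decide_eq_decide, Nat.even_iff, Nat.even_iff] at this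
      omega
  funext j
  have hj : (j : ℕ) < n := j.isLt
  have hx := cnt_succ j.isLt x
  have hy := cnt_succ j.isLt y
  rw [Fin.eta] at hx hy
  have p1 := hpar (j : ℕ) (by omega)
  have p2 := hpar ((j : ℕ) + 1) (by omega)
  cases hxj : x j <;> cases hyj : y j
  · rfl
  · rw [hxj] at hx; rw [hyj] at hy; simp at hx hy; omega
  · rw [hxj] at hx; rw [hyj] at hy; simp at hx hy; omega
  · rfl

lemma nv_lt_two_pow (x : Fin n → Bool) : Nv x < 2 ^ n := by
  unfold Nv
  calc (∑ m ∈ Finset.range n, if bt x m then 2 ^ m else 0)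
      ≤ ∑ m ∈ Finset.range n, 2 ^ m :=
        Finset.sum_le_sum fun m _ => by split <;> simp
    _ = 2 ^ n - 1 := two_pow_sum n
    _ < 2 ^ n := by have : 1 ≤ 2 ^ n := Nat.one_le_two_pow; omega

/-- Successor step. -/
lemma nv_succ {x : Fin n → Bool} (h : Nv x + 1 < 2 ^ n) :
    ∃ y, TwE n x y ∧ Nv y = Nv x + 1 := by
  classical
  have hex : ∃ m, m < n ∧ bt x m = false := by
    by_contra hc
    push_neg at hc
    have : Nv x = 2 ^ n - 1 := by
      unfold Nv
      rw [Finset.sum_congr rfl fun m hm => ?_, two_pow_sum]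
      have hmn := Finset.mem_range.1 hm
      rcases Bool.eq_false_or_eq_true (bt x m) with hb | hb
      · rw [hb]; simp
      · exact absurd hb (hc m hmn)
    omega
  set m₀ := Nat.find hex with hm₀def
  obtain ⟨hm₀n, hbm₀⟩ := Nat.find_spec hex
  have hmin : ∀ m, m < m₀ → bt x m = true := by
    intro m hm
    have := Nat.find_min hex hm
    push_neg at this
    rcases Bool.eq_false_or_eq_true (bt x m) with hb | hb
    · exact hb
    · exact absurd hb (this (by omega))
  set i : Fin n := ⟨n - 1 - m₀, by omega⟩ with hidef
  have him₀ : n - 1 - (i : ℕ) = m₀ := by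
    simp only [hidef]
    omega
  set y := Function.update x i (!(x i)) with hydef
  have h1 : ∀ j, j ≠ i → x j = y j := by
    intro j hj
    rw [hydef, Function.update_of_ne hj]
  have h2 : y i = !(x i) := by rw [hydef, Function.update_self]
  have hcond : x i = true ↔ Odd (cnt x (i : ℕ)) := by
    rw [edge_cond_iff]
    have : bt x m₀ = false := hbm₀
    unfold bt at this
    rw [← him₀, nsub_eq] at this
    rw [Nat.odd_iff]
    rw [decide_eq_false_iff_not, Nat.even_iff] at this
    omega
  refine ⟨y, Or.inr ⟨i, h1, h2, ?_⟩, ?_⟩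
  · rw [cnt_eq_card]; exact hcond
  · have hf : bt x m₀ = false := hbm₀
    have hg : bt y m₀ = true := by
      rw [← him₀] at hf ⊢
      rw [bt_lo h1 h2 (le_refl _), hf]
      rfl
    have hglo : ∀ m, m < m₀ → bt y m = false := by
      intro m hm
      rw [bt_lo h1 h2 (by omega), hmin m hm]
      rfl
    exact sval_succ hm₀n (fun m hm hmn' => bt_hi h1 (by omega) hmn') hf hg hmin hglo

theorem stmt6 (n : ℕ) :
    ∃ g : (Fin n → Bool) ≃ Fin (2 ^ n),
      ∀ x y : Fin n → Bool,
        Relation.ReflTransGen (TwE n) x y ↔ g x ≤ g y := by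
  classical
  set φ : (Fin n → Bool) → Fin (2 ^ n) :=
    fun x => finFunctionFinEquiv (fun m : Fin n => if bt x (m : ℕ) then 1 else 0) with hφ
  have hval : ∀ x, (φ x : ℕ) = Nv x := by
    intro x
    have h1 : (φ x : ℕ) = ∑ i : Fin n, (if bt x (i : ℕ) then (2 : ℕ) ^ (i : ℕ) else 0) := by
      rw [hφ]
      simp only [finFunctionFinEquiv_apply]
      refine Finset.sum_congr rfl fun i _ => ?_
      split <;> simp
    rw [h1, Fin.sum_univ_eq_sum_range (fun m => if bt x m then (2 : ℕ) ^ m else 0)]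
    rfl
  have hinj : Function.Injective φ := by
    intro x y hxy
    rw [hφ] at hxy
    have hF := finFunctionFinEquiv.injective hxy
    apply bt_inj
    intro m hm
    have := congrFun hF ⟨m, hm⟩
    rcases Bool.eq_false_or_eq_true (bt x m) with hb | hb <;>
      rcases Bool.eq_false_or_eq_true (bt y m) with hb' | hb' <;>
        simp [hb, hb'] at this ⊢
  have hbij : Function.Bijective φ := by
    rw [Fintype.bijective_iff_injective_and_card]
    exact ⟨hinj, by simp⟩
  refine ⟨Equiv.ofBijective φ hbij, fun x y => ?_⟩
  have hle : ∀ a b : Fin n → Bool,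
      (Equiv.ofBijective φ hbij a ≤ Equiv.ofBijective φ hbij b ↔ Nv a ≤ Nv b) := by
    intro a b
    rw [Fin.le_def]
    simp only [Equiv.ofBijective_apply]
    rw [hval a, hval b]
  rw [hle]
  constructor
  · intro hrtg
    induction hrtg with
    | refl => exact le_rfl
    | tail _ hstep ih => exact le_trans ih (nv_mono hstep)
  · intro hnv
    obtain ⟨k, hk⟩ := Nat.le.dest hnv
    clear hnv
    induction k generalizing x with
    | zero =>
        have : Nv x = Nv y := by omega
        have : φ x = φ y := Fin.val_injective (by rw [hval, hval, this])
        rw [hinj this]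
    | succ k ih =>
        have hlt : Nv x + 1 < 2 ^ n := by
          have := nv_lt_two_pow y
          omega
        obtain ⟨z, hz1, hz2⟩ := nv_succ hlt
        exact Relation.ReflTransGen.head hz1 (ih z (by omega))
end

section
/- For every natural number n and every Hamiltonian path p through the twisted (n+1)-cube, the path contains exactly one edge in dimension 0: for every k with k + 1 < 2^(n+1), the vertices p k and p (k+1) differ in coordinate 0 (i.e., (p k) 0 ≠ (p (k+1)) 0) if and only if k = 2^n - 1. In particular, this single dimension-0 edge connects the Hamiltonian paths through the two copies of the twisted n-cube of which the twisted (n+1)-cube consists. -/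
theorem stmt8 (n : ℕ) (p : Fin (2 ^ (n + 1)) → (Fin (n + 1) → Bool))
    (hbij : Function.Bijective p)
    (hpath : ∀ k : ℕ, (h : k + 1 < 2 ^ (n + 1)) →
      TwE (n + 1) (p ⟨k, Nat.lt_of_succ_lt h⟩) (p ⟨k + 1, h⟩)) :
    ∀ k : ℕ, (h : k + 1 < 2 ^ (n + 1)) →
      ((p ⟨k, Nat.lt_of_succ_lt h⟩ 0 ≠ p ⟨k + 1, h⟩ 0) ↔ k = 2 ^ n - 1) := by
  have hpos : 0 < 2 ^ n := Nat.pow_pos (by norm_num)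
  have hNN : 2 ^ (n + 1) = 2 * 2 ^ n := by ring
  -- step monotonicity
  have hstep : ∀ (k : ℕ) (h : k + 1 < 2 ^ (n + 1)),
      p ⟨k, Nat.lt_of_succ_lt h⟩ 0 = true → p ⟨k + 1, h⟩ 0 = true := by
    intro k h hx
    rcases hpath k h with heq | ⟨i, hj, hy, hcond⟩
    · rw [← heq]; exact hx
    · by_cases hi : i = 0
      · subst hi
        have : (Finset.univ.filter
            (fun j : Fin (n + 1) => j < (0 : Fin (n+1)) ∧ p ⟨k, Nat.lt_of_succ_lt h⟩ j = false)).card = 0 := by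
          rw [Finset.card_eq_zero]
          ext j
          simp [Fin.not_lt_zero]
        rw [this] at hcond
        simp [Nat.odd_iff] at hcond
        rw [hx] at hcond
        exact absurd hcond (by simp)
      · rw [← hj 0 (fun e => hi e.symm)]; exact hx
  -- full monotonicity
  have hmono : ∀ (b : ℕ) (hb : b < 2 ^ (n + 1)) (a : ℕ) (ha : a ≤ b),
      p ⟨a, lt_of_le_of_lt ha hb⟩ 0 = true → p ⟨b, hb⟩ 0 = true := by
    intro b
    induction b with
    | zero => intro hb a ha hx; interval_cases a; exact hx
    | succ m ih =>
      intro hb a ha hx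
      rcases Nat.lt_or_ge a (m + 1) with hlt | hge
      · exact hstep m hb (ih (Nat.lt_of_succ_lt hb) a (Nat.lt_succ_iff.mp hlt) hx)
      · have : a = m + 1 := le_antisymm ha hge
        subst this; exact hx
  have hdown : ∀ (b : ℕ) (hb : b < 2 ^ (n + 1)) (a : ℕ) (ha : a ≤ b),
      p ⟨b, hb⟩ 0 = false → p ⟨a, lt_of_le_of_lt ha hb⟩ 0 = false := by
    intro b hb a ha hx
    by_contra hc
    have : p ⟨a, lt_of_le_of_lt ha hb⟩ 0 = true := by
      cases hpa : p ⟨a, lt_of_le_of_lt ha hb⟩ 0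
      · exact absurd hpa hc
      · rfl
    rw [hmono b hb a ha this] at hx; exact absurd hx (by simp)
  -- counting
  have hcard : (Finset.univ.filter (fun k : Fin (2 ^ (n + 1)) => p k 0 = false)).card = 2 ^ n := by
    rw [← Fintype.card_subtype]
    have e1 : {k : Fin (2 ^ (n + 1)) // p k 0 = false} ≃ {x : Fin (n + 1) → Bool // x 0 = false} :=
      (Equiv.ofBijective p hbij).subtypeEquiv (fun k => Iff.rfl)
    have e2 : {x : Fin (n + 1) → Bool // x 0 = false} ≃ (Fin n → Bool) :=
      { toFun := fun x => Fin.tail x.1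
        invFun := fun y => ⟨Fin.cons false y, Fin.cons_zero _ _⟩
        left_inv := by
          rintro ⟨x, hx⟩
          ext j
          simp only
          rw [← hx, Fin.cons_self_tail]
        right_inv := by
          intro y
          ext j
          simp [Fin.tail] }
    rw [Fintype.card_congr (e1.trans e2)]
    simp
  -- characterization
  have hchar : ∀ (k : ℕ) (hk : k < 2 ^ (n + 1)), (p ⟨k, hk⟩ 0 = false ↔ k < 2 ^ n) := by
    have htrue : p ⟨2 ^ n, by omega⟩ 0 = true := by
      by_contra hc
      have hc' : p ⟨2 ^ n, by omega⟩ 0 = false := by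
        cases hpa : p ⟨2 ^ n, by omega⟩ 0
        · rfl
        · exact absurd hpa hc
      have hsub : Finset.Iic (⟨2 ^ n, by omega⟩ : Fin (2 ^ (n + 1))) ⊆
          Finset.univ.filter (fun k : Fin (2 ^ (n + 1)) => p k 0 = false) := by
        intro a ha
        simp only [Finset.mem_Iic] at ha
        simp only [Finset.mem_filter, Finset.mem_univ, true_and]
        have := hdown (2 ^ n) (by omega) a.val ha hc'
        simpa using this
      have := Finset.card_le_card hsub
      simp only [hcard, Fin.card_Iic] at this
      omega
    have hfalse : p ⟨2 ^ n - 1, by omega⟩ 0 = false := by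
      by_contra hc
      have hc' : p ⟨2 ^ n - 1, by omega⟩ 0 = true := by
        cases hpa : p ⟨2 ^ n - 1, by omega⟩ 0
        · exact absurd hpa hc
        · rfl
      have hsub : Finset.univ.filter (fun k : Fin (2 ^ (n + 1)) => p k 0 = false) ⊆
          Finset.Iio (⟨2 ^ n - 1, by omega⟩ : Fin (2 ^ (n + 1))) := by
        intro a ha
        simp only [Finset.mem_filter, Finset.mem_univ, true_and] at ha
        simp only [Finset.mem_Iio]
        by_contra hge
        have hge' : 2 ^ n - 1 ≤ a.val := by
          have := not_lt.mp hge
          simpa [Fin.le_def] using this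
        have := hmono a.val a.isLt (2 ^ n - 1) hge' hc'
        simp only [Fin.eta] at this
        rw [this] at ha
        exact absurd ha (by simp)
      have := Finset.card_le_card hsub
      simp only [hcard, Fin.card_Iio] at this
      omega
    intro k hk
    constructor
    · intro hpk
      by_contra hge
      have := hmono k hk (2 ^ n) (by omega) htrue
      rw [this] at hpk
      exact absurd hpk (by simp)
    · intro hlt
      exact hdown (2 ^ n - 1) (by omega) k (by omega) hfalse
  -- conclusion
  intro k h
  have hk := hchar k (Nat.lt_of_succ_lt h)
  have hk1 := hchar (k + 1) h
  constructor
  · intro hne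
    by_cases hkb : p ⟨k, Nat.lt_of_succ_lt h⟩ 0 = false
    · have h1 : k < 2 ^ n := hk.mp hkb
      have h2 : ¬ (k + 1 < 2 ^ n) := by
        intro hlt
        exact hne (hkb.trans (hk1.mpr hlt).symm)
      omega
    · have hkb' : p ⟨k, Nat.lt_of_succ_lt h⟩ 0 = true := by
        cases hpa : p ⟨k, Nat.lt_of_succ_lt h⟩ 0
        · exact absurd hpa hkb
        · rfl
      have h2 : p ⟨k + 1, h⟩ 0 = true := hstep k h hkb'
      exact absurd (hkb'.trans h2.symm) hne
  · intro hke
    subst hke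
    have h1 : p ⟨2 ^ n - 1, Nat.lt_of_succ_lt h⟩ 0 = false := hk.mpr (by omega)
    have h2 : p ⟨2 ^ n - 1 + 1, h⟩ 0 = true := by
      by_contra hc
      have : p ⟨2 ^ n - 1 + 1, h⟩ 0 = false := by
        cases hpa : p ⟨2 ^ n - 1 + 1, h⟩ 0
        · rfl
        · exact absurd hpa hc
      have := hk1.mp this
      omega
    rw [h1, h2]
    simp
end

section
/- For every dimension-preserving graph morphism g from the twisted m-cube to the twisted n-cube, the image of g is a face: there exists a function f : Fin n → Option Bool such that the range of g equals the set of vertices y : Fin n → Bool satisfying y i = b for every i and b with f i = some b. -/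
theorem stmt10 (m n : ℕ) (g : (Fin m → Bool) → (Fin n → Bool))
    (hg : IsGraphHom (TwE m) (TwE n) g) (hd : DimPres g) :
    ∃ f : Fin n → Option Bool,
      Set.range g = {y : Fin n → Bool | ∀ i b, f i = some b → y i = b} := by
  classical
  have bool1 : ∀ a b : Bool, a ≠ b → a = !b := by decide
  have key : ∀ i : Fin m, ∃ o : Option (Fin n),
      (∀ x, o = none → g x = g (Function.update x i (!(x i)))) ∧
      (∀ j x, o = some j → Flips (g x) (g (Function.update x i (!(x i)))) j) := by
    intro i
    by_cases h : ∀ x, g x = g (Function.update x i (!(x i)))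
    · exact ⟨none, fun x _ => h x, fun j x hj => by simp at hj⟩
    · push_neg at h
      obtain ⟨x, hx⟩ := h
      have fx : Flips x (Function.update x i (!(x i))) i := by
        constructor
        · simp
        · intro j hj; rw [Function.update_of_ne hj]
      rcases hd x _ x _ i fx fx with ⟨h1, _⟩ | ⟨j, hj, _⟩
      · exact absurd h1 hx
      · refine ⟨some j, fun x' h' => by simp at h', ?_⟩
        rintro j' x' hj'
        have hjj : j' = j := (Option.some.inj hj').symm
        subst hjj
        have fx' : Flips x' (Function.update x' i (!(x' i))) i := by
          constructor
          · simp
          · intro k hk; rw [Function.update_of_ne hk]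
        rcases hd x _ x' _ i fx fx' with ⟨h1, _⟩ | ⟨k, hk, hk'⟩
        · exact absurd h1 hx
        · have hkj : k = j' := by
            by_contra hne
            exact hj.1 (hk.2 j' (Ne.symm hne))
          subst hkj
          exact hk'
  choose d hd0 hd1 using key
  set x0 : Fin m → Bool := fun _ => false with hx0
  refine ⟨fun j => if ∃ i, d i = some j then none else some (g x0 j), ?_⟩
  have hB : ∀ s : Finset (Fin m), ∀ j, (¬ ∃ i, d i = some j) →
      g (fun i => decide (i ∈ s)) j = g x0 j := by
    intro s
    induction s using Finset.induction_on with
    | empty =>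
      intro j _
      have : (fun i => decide (i ∈ (∅ : Finset (Fin m)))) = x0 := by
        funext i; simp [hx0]
      rw [this]
    | @insert a s ha ih =>
      intro j hj
      have he : (fun i => decide (i ∈ insert a s))
          = Function.update (fun i => decide (i ∈ s)) a (!(decide (a ∈ s))) := by
        funext k
        rcases eq_or_ne k a with rfl | hk
        · simp [ha]
        · rw [Function.update_of_ne hk]
          simp [Finset.mem_insert, hk]
      rw [he]
      rcases ho : d a with _ | j'
      · rw [← hd0 a (fun i => decide (i ∈ s)) ho]; exact ih j hj
      · have fl := hd1 a j' (fun i => decide (i ∈ s)) ho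
        have hne : j' ≠ j := fun h => hj ⟨a, by rw [ho, h]⟩
        rw [← fl.2 j (Ne.symm hne)]
        exact ih j hj
  have hC : ∀ s : Finset (Fin n), ∀ y : Fin n → Bool,
      (∀ j, (¬ ∃ i, d i = some j) → y j = g x0 j) →
      (∀ j, j ∉ s → y j = g x0 j) → ∃ x, g x = y := by
    intro s
    induction s using Finset.induction_on with
    | empty =>
      intro y h1 h2
      exact ⟨x0, by funext j; exact (h2 j (Finset.notMem_empty j)).symm⟩
    | @insert a t ha ih =>
      intro y h1 h2
      by_cases hy : y a = g x0 a
      · refine ih y h1 (fun j hj => ?_)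
        rcases eq_or_ne j a with rfl | hja
        · exact hy
        · exact h2 j (by simp [Finset.mem_insert, hja, hj])
      · have hma : ∃ i, d i = some a := by
          by_contra hc; exact hy (h1 a hc)
        obtain ⟨i, hi⟩ := hma
        obtain ⟨x, hx⟩ := ih (Function.update y a (g x0 a))
          (fun j hj => by
            rcases eq_or_ne j a with rfl | hja
            · simp
            · rw [Function.update_of_ne hja]; exact h1 j hj)
          (fun j hj => by
            rcases eq_or_ne j a with rfl | hja
            · simp
            · rw [Function.update_of_ne hja]
              exact h2 j (by simp [Finset.mem_insert, hja, hj]))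
        have fl := hd1 i a x hi
        refine ⟨Function.update x i (!(x i)), funext fun j => ?_⟩
        rcases eq_or_ne j a with rfl | hja
        · have h1' : g x j = g x0 j := by rw [hx]; simp
          have e1 := bool1 _ _ (Ne.symm fl.1)
          have e2 := bool1 _ _ hy
          rw [e1, h1', ← e2]
        · rw [← fl.2 j hja, hx, Function.update_of_ne hja]
  ext y
  simp only [Set.mem_range, Set.mem_setOf_eq]
  constructor
  · rintro ⟨x, rfl⟩ j b hf
    by_cases hc : ∃ i2, d i2 = some j
    · rw [if_pos hc] at hf; exact absurd hf (by simp)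
    · rw [if_neg hc] at hf
      have hb : g x0 j = b := by injection hf
      subst hb
      have hxe : g x = g (fun k => decide (k ∈ Finset.filter (fun k => x k = true) Finset.univ)) := by
        congr 1
        funext k
        simp [Finset.mem_filter]
      rw [hxe]
      exact hB _ j hc
  · intro hy
    refine hC Finset.univ y (fun j hj => ?_) (fun j hj => absurd (Finset.mem_univ j) hj)
    exact hy j _ (if_neg hj)
end

section
/- For all natural numbers m and n, there is a bijection between the set of faces of the twisted n-cube of dimension m (functions f : Fin n → Option Bool with exactly m indices i satisfying f i = none) and the set of injective dimension-preserving graph morphisms from the twisted m-cube to the twisted n-cube. -/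
namespace Stmt11

open Finset

def ind (b : Bool) : ZMod 2 := if b then 1 else 0

@[simp] lemma ind_true : ind true = 1 := rfl
@[simp] lemma ind_false : ind false = 0 := rfl

lemma ind_inj {a b : Bool} (h : ind a = ind b) : a = b := by
  cases a <;> cases b <;> simp_all [ind]

lemma ind_xor (a b : Bool) : ind (xor a b) = ind a + ind b := by
  cases a <;> cases b <;> decide

def P {n : ℕ} (x : Fin n → Bool) (i : Fin n) : ZMod 2 :=
  ∑ j, if j ≤ i ∧ x j = false then 1 else 0

lemma odd_card_iff {α : Type*} [Fintype α] (p : α → Prop) [DecidablePred p] :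
    Odd (Finset.univ.filter p).card ↔ (∑ a, if p a then (1 : ZMod 2) else 0) = 1 := by
  rw [Finset.card_filter]
  have : ((∑ a, if p a then 1 else 0 : ℕ) : ZMod 2) = ∑ a, if p a then (1 : ZMod 2) else 0 := by
    push_cast
    rfl
  rw [← this, Nat.odd_iff]
  set N := (∑ a, if p a then 1 else 0 : ℕ)
  rw [show ((N : ZMod 2)) = ((N % 2 : ℕ) : ZMod 2) from (ZMod.natCast_mod N 2).symm]
  have := Nat.mod_two_eq_zero_or_one N
  rcases this with h | h <;> rw [h] <;> simp <;> decide

lemma bool_ne {a b : Bool} (h : a ≠ b) : b = !a := by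
  cases a <;> cases b <;> simp_all

lemma flips_ne {n : ℕ} {x y : Fin n → Bool} {i : Fin n} (h : Flips x y i) : x ≠ y :=
  fun he => h.1 (congrFun he i)

lemma flips_symm {n : ℕ} {x y : Fin n → Bool} {i : Fin n} (h : Flips x y i) : Flips y x i :=
  ⟨fun he => h.1 he.symm, fun j hj => (h.2 j hj).symm⟩

lemma flips_unique {n : ℕ} {x y : Fin n → Bool} {i i' : Fin n}
    (h : Flips x y i) (h' : Flips x y i') : i = i' := by
  by_contra hne
  exact h.1 (h'.2 i (by simpa using hne))

lemma flips_y_eq {n : ℕ} {x y : Fin n → Bool} {i : Fin n} (h : Flips x y i) :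
    y i = !(x i) := by
  cases hx : x i <;> cases hy : y i <;> simp_all [Flips]

lemma zmod2 : ∀ x : ZMod 2, x = 0 ∨ x = 1 := by decide

lemma zmod2_ne_one : ∀ x : ZMod 2, x ≠ 1 → x = 0 := by decide

lemma zmod2_cancel : ∀ u v w : ZMod 2, u + v = w → u = v + w := by decide

lemma cond_iff (b : Bool) (s : ZMod 2) :
    (b = true ↔ s = 1) ↔ s + (if b = false then 1 else 0) = 1 := by
  rcases zmod2 s with rfl | rfl <;> cases b <;> simp <;> decide

lemma P_lt {n : ℕ} (x : Fin n → Bool) (i : Fin n) :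
    P x i = (∑ j, if j < i ∧ x j = false then (1 : ZMod 2) else 0)
      + (if x i = false then 1 else 0) := by
  unfold P
  have hpt : ∀ j : Fin n, (if j ≤ i ∧ x j = false then (1:ZMod 2) else 0)
      = (if j < i ∧ x j = false then 1 else 0) + (if j = i ∧ x j = false then 1 else 0) := by
    intro j
    rcases lt_trichotomy j i with hj | hj | hj
    · simp [hj.le, hj, hj.ne]
    · subst hj; simp [lt_irrefl]
    · simp [hj.not_gt, not_le.mpr hj, hj.ne']
  rw [Finset.sum_congr rfl (fun j _ => hpt j), Finset.sum_add_distrib]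
  congr 1
  have h2 : ∀ j : Fin n, (if j = i ∧ x j = false then (1:ZMod 2) else 0)
      = if j = i then (if x j = false then (1:ZMod 2) else 0) else 0 := by
    intro j
    by_cases h1 : j = i <;> by_cases hq : x j = false <;> simp [h1, hq]
  rw [Finset.sum_congr rfl (fun j _ => h2 j), Finset.sum_ite_eq' Finset.univ i]
  simp

lemma twE_iff_P {n : ℕ} {x y : Fin n → Bool} {i : Fin n} (h : Flips x y i) :
    TwE n x y ↔ P x i = 1 := by
  have hodd := odd_card_iff (fun j : Fin n => j < i ∧ x j = false)
  have hP := P_lt x i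
  have key : (x i = true ↔
      Odd (Finset.univ.filter (fun j : Fin n => j < i ∧ x j = false)).card) ↔ P x i = 1 := by
    rw [hodd, hP]
    exact cond_iff _ _
  constructor
  · rintro (he | ⟨i', h1, h2, h3⟩)
    · exact absurd he (flips_ne h)
    · have hf' : Flips x y i' := by
        refine ⟨?_, h1⟩
        rw [h2]; cases x i' <;> simp
      obtain rfl := flips_unique h hf'
      exact key.mp h3
  · intro hp
    exact Or.inr ⟨i, h.2, flips_y_eq h, key.mpr hp⟩

lemma flips_P {n : ℕ} {a b : Fin n → Bool} {i : Fin n} (h : Flips a b i) (t : Fin n) :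
    P b t = P a t + (if i ≤ t then 1 else 0) := by
  apply zmod2_cancel
  unfold P
  rw [← Finset.sum_add_distrib]
  rw [Finset.sum_eq_single i]
  · have hbi := flips_y_eq h
    by_cases hle : i ≤ t
    · cases ha : a i <;> rw [hbi, ha] <;> simp [hle] <;> decide
    · simp [hle]
  · intro j _ hj
    have hab := h.2 j hj
    rw [hab]
    by_cases hq : j ≤ t ∧ b j = false
    · rw [if_pos hq]; decide
    · rw [if_neg hq]; decide
  · intro hi; exact absurd (Finset.mem_univ i) hi

section Face

variable {m n : ℕ} (f : Fin n → Option Bool)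
  (hf : (Finset.univ.filter (fun i => f i = none)).card = m)

/-- the increasing enumeration of the free coordinates -/
def phi (k : Fin m) : Fin n :=
  (Finset.univ.filter (fun i => f i = none)).orderEmbOfFin hf k

lemma phi_mono : StrictMono (phi f hf) :=
  ((Finset.univ.filter (fun i => f i = none)).orderEmbOfFin hf).strictMono

lemma phi_none (k : Fin m) : f (phi f hf k) = none := by
  have := Finset.orderEmbOfFin_mem (Finset.univ.filter (fun i => f i = none)) hf k
  rw [Finset.mem_filter] at this
  exact this.2

/-- inverse of phi on the free coordinates -/
def psi (j : Fin n) (hj : f j = none) : Fin m :=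
  ((Finset.univ.filter (fun i => f i = none)).orderIsoOfFin hf).symm
    ⟨j, by simp [Finset.mem_filter, hj]⟩

lemma phi_psi (j : Fin n) (hj : f j = none) : phi f hf (psi f hf j hj) = j := by
  rw [phi, ← Finset.coe_orderIsoOfFin_apply, psi, OrderIso.apply_symm_apply]

lemma psi_phi (k : Fin m) : psi f hf (phi f hf k) (phi_none f hf k) = k := by
  apply (phi_mono f hf).injective
  rw [phi_psi]

/-- parity of the number of fixed-false coordinates below the t-th free coordinate -/
def cpar (t : ℕ) : ZMod 2 :=
  if h : t < m then
    ∑ j : Fin n, (if j < phi f hf ⟨t, h⟩ ∧ f j = some false then 1 else 0)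
  else 0

def D (t : ℕ) : ZMod 2 :=
  cpar f hf t + (match t with | 0 => 0 | s + 1 => cpar f hf s)

def bbool (k : Fin m) : Bool := decide (D f hf (k : ℕ) = 1)

lemma ind_bbool (k : Fin m) : ind (bbool f hf k) = D f hf (k : ℕ) := by
  unfold bbool
  rcases zmod2 (D f hf (k : ℕ)) with h | h <;> rw [h] <;> decide

/-- the graph morphism associated to a face -/
def G (z : Fin m → Bool) : Fin n → Bool := fun j =>
  if h : f j = none then xor (z (psi f hf j h)) (bbool f hf (psi f hf j h))
  else (f j).getD true

lemma G_phi (z : Fin m → Bool) (k : Fin m) :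
    G f hf z (phi f hf k) = xor (z k) (bbool f hf k) := by
  unfold G
  rw [dif_pos (phi_none f hf k)]
  rw [psi_phi]

lemma G_fixed (z : Fin m → Bool) (j : Fin n) (hj : f j ≠ none) :
    G f hf z j = (f j).getD true := by
  unfold G
  rw [dif_neg hj]

lemma G_flips (z z' : Fin m → Bool) (k : Fin m) (h : Flips z z' k) :
    Flips (G f hf z) (G f hf z') (phi f hf k) := by
  constructor
  · rw [G_phi, G_phi]
    have := h.1
    cases hz : z k <;> cases hz' : z' k <;> simp_all
  · intro j hj
    unfold G
    by_cases hjn : f j = none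
    · rw [dif_pos hjn, dif_pos hjn]
      have hk : psi f hf j hjn ≠ k := by
        intro he
        apply hj
        rw [← phi_psi f hf j hjn, he]
      rw [h.2 _ hk]
    · rw [dif_neg hjn, dif_neg hjn]

end Face

section Face2

variable {m n : ℕ} (f : Fin n → Option Bool)
  (hf : (Finset.univ.filter (fun i => f i = none)).card = m)

lemma tele : ∀ K : ℕ, ∑ t ∈ Finset.range (K + 1), D f hf t = cpar f hf K := by
  intro K
  induction K with
  | zero => simp [D]
  | succ K ih =>
    rw [Finset.sum_range_succ, ih]
    show cpar f hf K + (cpar f hf (K + 1) + cpar f hf K) = _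
    have h2 : ∀ a b : ZMod 2, a + (b + a) = b := by decide
    exact h2 _ _

lemma sum_le_D (k : Fin m) :
    (∑ t : Fin m, if t ≤ k then D f hf (t : ℕ) else 0) = cpar f hf (k : ℕ) := by
  have h1 : ∀ t : Fin m, (if t ≤ k then D f hf (t : ℕ) else 0)
      = (fun s : ℕ => if s ≤ (k : ℕ) then D f hf s else 0) (t : ℕ) := by
    intro t
    simp only [Fin.le_def]
  rw [Finset.sum_congr rfl (fun t _ => h1 t),
    Fin.sum_univ_eq_sum_range (fun s : ℕ => if s ≤ (k : ℕ) then D f hf s else 0) m,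
    ← tele f hf (k : ℕ)]
  rw [show (∑ t ∈ Finset.range ((k : ℕ) + 1), D f hf t)
      = ∑ t ∈ Finset.range ((k : ℕ) + 1), (if t ≤ (k : ℕ) then D f hf t else 0) from
    Finset.sum_congr rfl (by
      intro x hx
      rw [Finset.mem_range] at hx
      rw [if_pos (by omega)])]
  symm
  apply Finset.sum_subset (Finset.range_subset_range.mpr (by omega : (k : ℕ) + 1 ≤ m))
  intro x _ hnx
  rw [Finset.mem_range] at hnx
  rw [if_neg (by omega)]

lemma sum_free (k : Fin m) (F : Fin n → ZMod 2) :
    (∑ j : Fin n, if j ≤ phi f hf k ∧ f j = none then F j else 0)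
      = ∑ t : Fin m, if t ≤ k then F (phi f hf t) else 0 := by
  rw [← Finset.sum_filter, ← Finset.sum_filter]
  refine Finset.sum_bij' (fun j hj => psi f hf j (Finset.mem_filter.mp hj).2.2)
    (fun t ht => phi f hf t) ?_ ?_ ?_ ?_ ?_
  · intro a ha
    obtain ⟨-, hle, hn⟩ := Finset.mem_filter.mp ha
    rw [Finset.mem_filter]
    refine ⟨Finset.mem_univ _, ?_⟩
    rw [← (phi_mono f hf).le_iff_le, phi_psi]
    exact hle
  · intro t ht
    obtain ⟨-, hle⟩ := Finset.mem_filter.mp ht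
    rw [Finset.mem_filter]
    exact ⟨Finset.mem_univ _, (phi_mono f hf).le_iff_le.mpr hle, phi_none f hf t⟩
  · intro a ha
    exact phi_psi f hf a (Finset.mem_filter.mp ha).2.2
  · intro t ht
    exact psi_phi f hf t
  · intro a ha
    rw [phi_psi]

end Face2

section Face3

variable {m n : ℕ} (f : Fin n → Option Bool)
  (hf : (Finset.univ.filter (fun i => f i = none)).card = m)

lemma xor_false_ind (a b : Bool) :
    (if xor a b = false then (1 : ZMod 2) else 0) = 1 + ind a + ind b := by
  cases a <;> cases b <;> decide

lemma bool_false_ind (a : Bool) :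
    (if a = false then (1 : ZMod 2) else 0) = 1 + ind a := by
  cases a <;> decide

lemma cpar_eq (k : Fin m) :
    cpar f hf (k : ℕ)
      = ∑ j : Fin n, (if j ≤ phi f hf k ∧ f j = some false then (1 : ZMod 2) else 0) := by
  rw [cpar, dif_pos k.2]
  refine Finset.sum_congr rfl fun j _ => ?_
  have he : phi f hf ⟨(k : ℕ), k.2⟩ = phi f hf k := by congr
  rw [he]
  by_cases hj : j ≤ phi f hf k ∧ f j = some false
  · rw [if_pos hj, if_pos ?_]
    refine ⟨lt_of_le_of_ne hj.1 ?_, hj.2⟩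
    intro hje
    rw [hje] at hj
    rw [phi_none f hf k] at hj
    exact absurd hj.2 (by simp)
  · rw [if_neg hj, if_neg (fun hc => hj ⟨hc.1.le, hc.2⟩)]

lemma P_G (z : Fin m → Bool) (k : Fin m) :
    P (G f hf z) (phi f hf k) = P z k := by
  have split : ∀ j : Fin n,
      (if j ≤ phi f hf k ∧ G f hf z j = false then (1 : ZMod 2) else 0)
        = (if j ≤ phi f hf k ∧ f j = none
            then (if G f hf z j = false then (1 : ZMod 2) else 0) else 0)
          + (if j ≤ phi f hf k ∧ f j = some false then 1 else 0) := by
    intro j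
    by_cases hle : j ≤ phi f hf k
    · cases hfj : f j with
      | none =>
        simp only [hle, hfj, true_and, if_true]
        simp
      | some v =>
        have hG : G f hf z j = v := by
          rw [G_fixed f hf z j (by rw [hfj]; simp), hfj]
          rfl
        cases v <;> simp [hfj, hG, hle]
    · simp [hle]
  rw [P, Finset.sum_congr rfl (fun j _ => split j), Finset.sum_add_distrib, ← cpar_eq]
  rw [sum_free f hf k (fun j => if G f hf z j = false then (1 : ZMod 2) else 0)]
  have h2 : ∀ t : Fin m, (if t ≤ k then (if G f hf z (phi f hf t) = false
      then (1 : ZMod 2) else 0) else 0)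
      = ((if t ≤ k then (1 + ind (z t)) else 0) + (if t ≤ k then D f hf (t : ℕ) else 0)) := by
    intro t
    by_cases ht : t ≤ k
    · rw [if_pos ht, if_pos ht, if_pos ht, G_phi, xor_false_ind, ind_bbool, add_assoc]
    · simp [ht]
  rw [Finset.sum_congr rfl (fun t _ => h2 t), Finset.sum_add_distrib, sum_le_D]
  have h3 : ∀ a c : ZMod 2, a + (c + c) = a := by decide
  rw [add_assoc, h3 _ _]
  rw [P]
  refine (Finset.sum_congr rfl fun t _ => ?_).symm
  by_cases ht : t ≤ k
  · simp only [ht, true_and, if_true]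
    exact bool_false_ind (z t)
  · simp [ht]

end Face3

section Face4

variable {m n : ℕ} (f : Fin n → Option Bool)
  (hf : (Finset.univ.filter (fun i => f i = none)).card = m)

lemma flips_update {M : ℕ} (z : Fin M → Bool) (k : Fin M) :
    Flips z (Function.update z k (!z k)) k := by
  constructor
  · rw [Function.update_self]
    cases z k <;> simp
  · intro j hj
    rw [Function.update_of_ne hj]

lemma G_hom : IsGraphHom (TwE m) (TwE n) (G f hf) := by
  intro z z' hzz
  rcases hzz with he | ⟨k, h1, h2, h3⟩
  · exact Or.inl (by rw [he])
  · have hfl : Flips z z' k := ⟨by rw [h2]; cases z k <;> simp, h1⟩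
    have hp : P z k = 1 := (twE_iff_P hfl).mp (Or.inr ⟨k, h1, h2, h3⟩)
    have hgf := G_flips f hf z z' k hfl
    exact (twE_iff_P hgf).mpr (by rw [P_G]; exact hp)

lemma G_dimpres : DimPres (G f hf) := by
  intro x1 y1 x2 y2 i h1 h2
  exact Or.inr ⟨phi f hf i, G_flips f hf _ _ i h1, G_flips f hf _ _ i h2⟩

lemma G_inj : Function.Injective (G f hf) := by
  intro z z' h
  funext k
  have hc := congrFun h (phi f hf k)
  rw [G_phi, G_phi] at hc
  cases hb : bbool f hf k <;> rw [hb] at hc <;>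
    cases hz : z k <;> cases hz' : z' k <;> simp_all

lemma G_const_of_some {j : Fin n} {v : Bool} (hj : f j = some v) (z : Fin m → Bool) :
    G f hf z j = v := by
  rw [G_fixed f hf z j (by rw [hj]; simp), hj]
  rfl

lemma G_ne_of_none_at {j : Fin n} (hj : f j = none) :
    G f hf (fun _ => true) j ≠
      G f hf (Function.update (fun _ => true) (psi f hf j hj) false) j := by
  generalize hk : psi f hf j hj = k
  have hpj : phi f hf k = j := by rw [← hk]; exact phi_psi f hf j hj
  subst hpj
  rw [G_phi, G_phi, Function.update_self]
  cases bbool f hf k <;> simp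

lemma face_inj {f' : Fin n → Option Bool}
    (hf' : (Finset.univ.filter (fun i => f' i = none)).card = m)
    (h : G f hf = G f' hf') : f = f' := by
  funext j
  have hsymm : ∀ (a b : Fin n → Option Bool) (ha : (Finset.univ.filter
        (fun i => a i = none)).card = m)
      (hb : (Finset.univ.filter (fun i => b i = none)).card = m),
      G a ha = G b hb → a j = none → b j = none := by
    intro a b ha hb hab haj
    cases hbj : b j with
    | none => rfl
    | some v =>
      exfalso
      apply G_ne_of_none_at a ha haj
      rw [hab]
      rw [G_const_of_some b hb hbj, G_const_of_some b hb hbj]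
  cases hj : f j with
  | none => rw [hsymm f f' hf hf' h hj]
  | some v =>
    cases hj' : f' j with
    | none => exact absurd (hsymm f' f hf' hf h.symm hj') (by rw [hj]; simp)
    | some v' =>
      have h1 : G f hf (fun _ => true) j = v := G_const_of_some f hf hj _
      have h2 : G f' hf' (fun _ => true) j = v' := G_const_of_some f' hf' hj' _
      rw [h] at h1
      rw [h1] at h2
      rw [h2]

end Face4

section Surj

variable {m n : ℕ} (g : (Fin m → Bool) → (Fin n → Bool))

lemma twE_flips {N : ℕ} {a b : Fin N → Bool} (h : TwE N a b) (hne : a ≠ b) :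
    ∃ i, Flips a b i := by
  rcases h with he | ⟨i, h1, h2, h3⟩
  · exact absurd he hne
  · exact ⟨i, ⟨by rw [h2]; cases a i <;> simp, h1⟩⟩

variable (hhom : IsGraphHom (TwE m) (TwE n) g) (hdim : DimPres g)
  (hinj : Function.Injective g)

include hhom hdim hinj in
lemma img_flips : ∀ (z : Fin m → Bool) (k : Fin m),
    ∃ j, Flips (g z) (g (Function.update z k (!z k))) j := by
  intro z k
  have hpf : P (Function.update z k (!z k)) k = P z k + 1 := by
    simpa using flips_P (flips_update z k) k
  have hne : g z ≠ g (Function.update z k (!z k)) :=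
    fun he => flips_ne (flips_update z k) (hinj he)
  rcases zmod2 (P z k) with hp | hp
  · have hp2 : P (Function.update z k (!z k)) k = 1 := by
      rw [hpf, hp]; decide
    have ht : TwE m (Function.update z k (!z k)) z :=
      (twE_iff_P (flips_symm (flips_update z k))).mpr hp2
    obtain ⟨i, hi⟩ := twE_flips (hhom _ _ ht) (Ne.symm hne)
    exact ⟨i, flips_symm hi⟩
  · have ht : TwE m z (Function.update z k (!z k)) :=
      (twE_iff_P (flips_update z k)).mpr hp
    exact twE_flips (hhom _ _ ht) hne

/-- the coordinate of the image of a flip of coordinate k -/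
noncomputable def Phi (k : Fin m) : Fin n :=
  Classical.choose (img_flips g hhom hdim hinj (fun _ => true) k)

include hhom hdim hinj in
lemma Phi_spec_base (k : Fin m) :
    Flips (g (fun _ => true)) (g (Function.update (fun _ => true) k
      (!(true : Bool)))) (Phi g hhom hdim hinj k) :=
  Classical.choose_spec (img_flips g hhom hdim hinj (fun _ => true) k)

include hhom hdim hinj in
lemma Phi_spec (z : Fin m → Bool) (k : Fin m) :
    Flips (g z) (g (Function.update z k (!z k))) (Phi g hhom hdim hinj k) := by
  rcases hdim z (Function.update z k (!z k)) (fun _ => true)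
      (Function.update (fun _ => true) k (!(true : Bool))) k
      (flips_update _ k) (flips_update _ k) with ⟨he, -⟩ | ⟨j, hj1, hj2⟩
  · exact absurd (hinj he) (flips_ne (flips_update z k))
  · rwa [flips_unique hj2 (Phi_spec_base g hhom hdim hinj k)] at hj1

include hhom hdim hinj in
lemma E_key (z : Fin m → Bool) (k : Fin m) :
    P (g z) (Phi g hhom hdim hinj k) = P z k := by
  have hpf : P (Function.update z k (!z k)) k = P z k + 1 := by
    simpa using flips_P (flips_update z k) k
  rcases zmod2 (P z k) with hp | hp
  · have hp2 : P (Function.update z k (!z k)) k = 1 := by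
      rw [hpf, hp]; decide
    have ht : TwE m (Function.update z k (!z k)) z :=
      (twE_iff_P (flips_symm (flips_update z k))).mpr hp2
    have h2 := (twE_iff_P (flips_symm (Phi_spec g hhom hdim hinj z k))).mp (hhom _ _ ht)
    have h3 := flips_P (Phi_spec g hhom hdim hinj z k) (Phi g hhom hdim hinj k)
    rw [if_pos le_rfl, h2] at h3
    rw [hp]
    rcases zmod2 (P (g z) (Phi g hhom hdim hinj k)) with h4 | h4
    · exact h4
    · rw [h4] at h3; exact absurd h3 (by decide)
  · have ht : TwE m z (Function.update z k (!z k)) :=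
      (twE_iff_P (flips_update z k)).mpr hp
    have h2 := (twE_iff_P (Phi_spec g hhom hdim hinj z k)).mp (hhom _ _ ht)
    rw [hp, h2]

lemma ite_one_zero_inj {p q : Prop} [Decidable p] [Decidable q]
    (h : (if p then (1 : ZMod 2) else 0) = (if q then 1 else 0)) : p ↔ q := by
  by_cases hp : p <;> by_cases hq : q <;> simp [hp, hq] at h ⊢ <;>
    exact absurd h (by decide)

include hhom hdim hinj in
lemma Phi_le_iff (k k' : Fin m) :
    Phi g hhom hdim hinj k' ≤ Phi g hhom hdim hinj k ↔ k' ≤ k := by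
  have h1 := flips_P (flips_update (fun _ : Fin m => true) k') k
  have h2 := flips_P (Phi_spec g hhom hdim hinj (fun _ => true) k')
    (Phi g hhom hdim hinj k)
  rw [E_key g hhom hdim hinj, E_key g hhom hdim hinj] at h2
  rw [h1] at h2
  exact ite_one_zero_inj (add_left_cancel h2.symm)

include hhom hdim hinj in
lemma Phi_mono : StrictMono (Phi g hhom hdim hinj) := by
  intro k' k hk
  rcases lt_or_eq_of_le ((Phi_le_iff g hhom hdim hinj k k').mpr hk.le) with h | h
  · exact h
  · exfalso
    have := (Phi_le_iff g hhom hdim hinj k' k).mp (le_of_eq h.symm)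
    exact absurd (le_antisymm hk.le this) (ne_of_lt hk)

end Surj

section Surj2

variable {m n : ℕ} (g : (Fin m → Bool) → (Fin n → Bool))
  (hhom : IsGraphHom (TwE m) (TwE n) g) (hdim : DimPres g)
  (hinj : Function.Injective g)

include hhom hdim hinj in
lemma reach : ∀ (d : ℕ) (z : Fin m → Bool),
    (Finset.univ.filter (fun k => z k = false)).card = d →
    (∀ j : Fin n, (∀ k, j ≠ Phi g hhom hdim hinj k) → g z j = g (fun _ => true) j) ∧
    (∀ k : Fin m, g z (Phi g hhom hdim hinj k)
      = xor (z k) (xor true (g (fun _ => true) (Phi g hhom hdim hinj k)))) := by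
  intro d
  induction d using Nat.strong_induction_on with
  | _ d ih =>
    intro z hz
    by_cases h0 : ∀ k, z k = true
    · have hzz : z = fun _ => true := funext h0
      subst hzz
      refine ⟨fun j _ => rfl, fun k => by simp⟩
    · push_neg at h0
      obtain ⟨k0, hk0⟩ := h0
      have hk0f : z k0 = false := by
        cases hv : z k0
        · rfl
        · exact absurd hv hk0
      set z' := Function.update z k0 true with hz'
      have hflip : Function.update z' k0 (!z' k0) = z := by
        funext j
        by_cases hj : j = k0
        · subst hj
          simp [hz', hk0f]
        · simp [hz', Function.update_of_ne hj]
      have hcard : (Finset.univ.filter (fun k => z' k = false)).card < d := by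
        rw [← hz]
        apply Finset.card_lt_card
        constructor
        · intro k hk
          rw [Finset.mem_filter] at hk ⊢
          refine ⟨Finset.mem_univ _, ?_⟩
          have hke : k ≠ k0 := by
            intro he
            rw [he, hz'] at hk
            simp at hk
          rw [← hk.2, hz', Function.update_of_ne hke]
        · intro hsub
          have h1 : k0 ∈ Finset.univ.filter (fun k => z k = false) := by
            rw [Finset.mem_filter]
            exact ⟨Finset.mem_univ _, hk0f⟩
          have h2 := hsub h1
          rw [Finset.mem_filter, hz'] at h2
          simp at h2
      obtain ⟨IH1, IH2⟩ := ih _ hcard z' rfl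
      have hfl := Phi_spec g hhom hdim hinj z' k0
      rw [hflip] at hfl
      constructor
      · intro j hj
        rw [← hfl.2 j (hj k0)]
        exact IH1 j hj
      · intro k
        by_cases hk : k = k0
        · subst hk
          have hval : g z (Phi g hhom hdim hinj k)
              = !(g z' (Phi g hhom hdim hinj k)) := bool_ne hfl.1
          rw [hval, IH2 k, hk0f]
          simp [hz']
        · have hkp : Phi g hhom hdim hinj k ≠ Phi g hhom hdim hinj k0 :=
            fun he => hk ((Phi_mono g hhom hdim hinj).injective he)
          rw [← hfl.2 _ hkp, IH2 k, hz', Function.update_of_ne hk]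

open Classical in
/-- the face extracted from an injective dimension-preserving morphism -/
noncomputable def fdef : Fin n → Option Bool := fun j =>
  if (∃ k, Phi g hhom hdim hinj k = j) then none else some (g (fun _ => true) j)

include hhom hdim hinj in
lemma hface : (Finset.univ.filter (fun i => fdef g hhom hdim hinj i = none)).card = m := by
  classical
  have he : Finset.univ.filter (fun i => fdef g hhom hdim hinj i = none)
      = Finset.univ.image (Phi g hhom hdim hinj) := by
    ext j
    rw [Finset.mem_filter, Finset.mem_image]
    constructor
    · rintro ⟨-, hj⟩
      rw [fdef] at hj
      by_cases hc : ∃ k, Phi g hhom hdim hinj k = j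
      · obtain ⟨k, hk⟩ := hc
        exact ⟨k, Finset.mem_univ _, hk⟩
      · rw [if_neg hc] at hj
        simp at hj
    · rintro ⟨k, -, hk⟩
      refine ⟨Finset.mem_univ _, ?_⟩
      rw [fdef, if_pos ⟨k, hk⟩]
  rw [he, Finset.card_image_of_injective _ (Phi_mono g hhom hdim hinj).injective,
    Finset.card_univ, Fintype.card_fin]

end Surj2

section Surj3

variable {m n : ℕ} (g : (Fin m → Bool) → (Fin n → Bool))
  (hhom : IsGraphHom (TwE m) (TwE n) g) (hdim : DimPres g)
  (hinj : Function.Injective g)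

include hhom hdim hinj in
lemma phi_fdef (k : Fin m) :
    phi (fdef g hhom hdim hinj) (hface g hhom hdim hinj) k = Phi g hhom hdim hinj k := by
  have hu := Finset.orderEmbOfFin_unique (hface g hhom hdim hinj)
      (f := Phi g hhom hdim hinj)
      (fun k => by
        rw [Finset.mem_filter]
        exact ⟨Finset.mem_univ _, by rw [fdef, if_pos ⟨k, rfl⟩]⟩)
      (Phi_mono g hhom hdim hinj)
  exact (congrFun hu k).symm

noncomputable def zb : Fin m → Bool := fun k =>
  xor (g (fun _ => true) (Phi g hhom hdim hinj k))
      (bbool (fdef g hhom hdim hinj) (hface g hhom hdim hinj) k)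

include hhom hdim hinj in
lemma G_zb : G (fdef g hhom hdim hinj) (hface g hhom hdim hinj) (zb g hhom hdim hinj)
    = g (fun _ => true) := by
  funext j
  by_cases hc : ∃ k, Phi g hhom hdim hinj k = j
  · obtain ⟨k, rfl⟩ := hc
    rw [← phi_fdef g hhom hdim hinj k, G_phi, phi_fdef g hhom hdim hinj k]
    show xor (zb g hhom hdim hinj k) _ = _
    rw [zb]
    simp [Bool.xor_assoc]
  · have hs : fdef g hhom hdim hinj j = some (g (fun _ => true) j) := by
      rw [fdef, if_neg hc]
    exact G_const_of_some _ _ hs _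

include hhom hdim hinj in
lemma zb_true : ∀ k : Fin m, zb g hhom hdim hinj k = true := by
  have key : ∀ k : Fin m, P (zb g hhom hdim hinj) k = 0 := by
    intro k
    have h1 := P_G (fdef g hhom hdim hinj) (hface g hhom hdim hinj) (zb g hhom hdim hinj) k
    rw [G_zb g hhom hdim hinj, phi_fdef g hhom hdim hinj] at h1
    rw [← h1, E_key g hhom hdim hinj]
    rw [P]
    apply Finset.sum_eq_zero
    intro t _
    rw [if_neg]
    simp
  have main : ∀ K : ℕ, ∀ k : Fin m, (k : ℕ) = K → zb g hhom hdim hinj k = true := by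
    intro K
    induction K using Nat.strong_induction_on with
    | _ K ih =>
      intro k hkK
      have hp := key k
      have hs : P (zb g hhom hdim hinj) k
          = (if k ≤ k ∧ zb g hhom hdim hinj k = false then (1 : ZMod 2) else 0) := by
        rw [P]
        apply Finset.sum_eq_single
        · intro t _ htk
          rw [if_neg]
          rintro ⟨hle, hfalse⟩
          have htlt : (t : ℕ) < K := by
            rw [← hkK]
            rw [Fin.le_def] at hle
            rcases lt_or_eq_of_le hle with h | h
            · exact h
            · exact absurd (Fin.ext h) htk
          rw [ih _ htlt t rfl] at hfalse
          exact Bool.true_eq_false_eq_False hfalse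
        · intro h
          exact absurd (Finset.mem_univ k) h
      rw [hs] at hp
      cases hv : zb g hhom hdim hinj k
      · rw [hv] at hp
        rw [if_pos ⟨le_rfl, rfl⟩] at hp
        exact absurd hp (by decide)
      · rfl
  intro k
  exact main (k : ℕ) k rfl

include hhom hdim hinj in
lemma bbool_eq (k : Fin m) :
    bbool (fdef g hhom hdim hinj) (hface g hhom hdim hinj) k
      = xor true (g (fun _ => true) (Phi g hhom hdim hinj k)) := by
  have h := zb_true g hhom hdim hinj k
  rw [zb] at h
  revert h
  cases bbool (fdef g hhom hdim hinj) (hface g hhom hdim hinj) k <;>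
    cases g (fun _ => true) (Phi g hhom hdim hinj k) <;> simp

include hhom hdim hinj in
lemma G_fdef_eq : G (fdef g hhom hdim hinj) (hface g hhom hdim hinj) = g := by
  funext z j
  obtain ⟨R1, R2⟩ := reach g hhom hdim hinj _ z rfl
  by_cases hc : ∃ k, Phi g hhom hdim hinj k = j
  · obtain ⟨k, rfl⟩ := hc
    rw [← phi_fdef g hhom hdim hinj k, G_phi, phi_fdef g hhom hdim hinj k, R2 k,
      bbool_eq g hhom hdim hinj k]
  · have hs : fdef g hhom hdim hinj j = some (g (fun _ => true) j) := by
      rw [fdef, if_neg hc]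
    rw [G_const_of_some _ _ hs z, R1 j (fun k he => hc ⟨k, he.symm⟩)]

end Surj3

end Stmt11

theorem stmt11 (m n : ℕ) :
    Nonempty
      ({f : Fin n → Option Bool //
          (Finset.univ.filter (fun i => f i = none)).card = m} ≃
       {g : (Fin m → Bool) → (Fin n → Bool) //
          IsGraphHom (TwE m) (TwE n) g ∧ DimPres g ∧ Function.Injective g}) := by
  refine ⟨Equiv.ofBijective
    (fun fp => ⟨Stmt11.G fp.1 fp.2,
      Stmt11.G_hom fp.1 fp.2, Stmt11.G_dimpres fp.1 fp.2, Stmt11.G_inj fp.1 fp.2⟩)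
    ⟨?_, ?_⟩⟩
  · intro a b hab
    exact Subtype.ext (Stmt11.face_inj a.1 a.2 b.2 (congrArg Subtype.val hab))
  · rintro ⟨g, h1, h2, h3⟩
    exact ⟨⟨Stmt11.fdef g h1 h2 h3, Stmt11.hface g h1 h2 h3⟩,
      Subtype.ext (Stmt11.G_fdef_eq g h1 h2 h3)⟩
end

section
/- Every dimension-preserving graph morphism g from the twisted m-cube to the twisted n-cube factors uniquely as an injective morphism after a surjective morphism: there exist a unique natural number k, a unique surjective dimension-preserving graph morphism s from the twisted m-cube to the twisted k-cube, and a unique injective dimension-preserving graph morphism h from the twisted k-cube to the twisted n-cube, such that g = h ∘ s. -/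
namespace TwProof

lemma boolext {a b : Bool} (h : (a = true) ↔ (b = true)) : a = b := by
  cases a <;> cases b <;> simp_all

lemma bool_eq_of_ne {a b c : Bool} (h1 : a ≠ c) (h2 : b ≠ c) : a = b := by
  cases a <;> cases b <;> cases c <;> simp_all

def pOdd {N : ℕ} (x : Fin N → Bool) (i : Fin N) : Prop :=
  Odd (Finset.univ.filter (fun j : Fin N => j < i ∧ x j = false)).card

variable {N : ℕ} {x y : Fin N → Bool} {i : Fin N}

lemma flips_symm (h : Flips x y i) : Flips y x i :=
  ⟨h.1.symm, fun j hj => (h.2 j hj).symm⟩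

lemma flips_ne (h : Flips x y i) : x ≠ y := fun e => h.1 (by rw [e])

lemma flips_flip (x : Fin N → Bool) (i : Fin N) :
    Flips x (Function.update x i (!x i)) i := by
  refine ⟨?_, fun j hj => ?_⟩
  · rw [Function.update_self]; cases x i <;> simp
  · rw [Function.update_of_ne hj]

lemma flips_y_eq (h : Flips x y i) : y i = !(x i) := by
  have := h.1; cases hx : x i <;> cases hy : y i <;> simp_all

lemma twE_refl : TwE N x x := Or.inl rfl

lemma twE_of_flips (h : Flips x y i) (hs : x i = true ↔ pOdd x i) : TwE N x y :=
  Or.inr ⟨i, h.2, flips_y_eq h, hs⟩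

lemma src_of_twE (h : TwE N x y) (hf : Flips x y i) : x i = true ↔ pOdd x i := by
  rcases h with h | ⟨i', hag, hfl, hsrc⟩
  · exact absurd (congrFun h i) hf.1
  · have hii : i' = i := by
      by_contra hne
      have hxy : x i' = y i' := hf.2 i' hne
      rw [hfl] at hxy
      simp at hxy
    subst hii
    exact hsrc

lemma twE_cases (h : TwE N x y) (hne : x ≠ y) :
    ∃ i, Flips x y i ∧ (x i = true ↔ pOdd x i) := by
  rcases h with h | ⟨i, hag, hfl, hsrc⟩
  · exact absurd h hne
  · refine ⟨i, ⟨?_, hag⟩, hsrc⟩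
    rw [hfl]; cases x i <;> simp


lemma pOdd_congr (h : ∀ j, j < i → x j = y j) : pOdd x i ↔ pOdd y i := by
  unfold pOdd
  have : (Finset.univ.filter (fun j : Fin N => j < i ∧ x j = false)) =
      (Finset.univ.filter (fun j : Fin N => j < i ∧ y j = false)) := by
    apply Finset.filter_congr
    intro j _
    constructor
    · rintro ⟨hj, hx⟩; exact ⟨hj, (h j hj) ▸ hx⟩
    · rintro ⟨hj, hy⟩; exact ⟨hj, (h j hj).symm ▸ hy⟩
  rw [this]

lemma pOdd_flip {w : Fin N} (hf : Flips x y w) (hw : w < i) :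
    (pOdd x i ↔ ¬ pOdd y i) := by
  unfold pOdd
  set S := Finset.univ.filter (fun j : Fin N => j < i ∧ x j = false) with hS
  set T := Finset.univ.filter (fun j : Fin N => j < i ∧ y j = false) with hT
  have hmem : ∀ j : Fin N, j ≠ w → (j ∈ S ↔ j ∈ T) := by
    intro j hj
    simp only [hS, hT, Finset.mem_filter, Finset.mem_univ, true_and]
    rw [hf.2 j hj]
  cases hxw : x w with
  | false =>
    have hyw : y w = true := by have := hf.1; cases hy : y w <;> simp_all
    have hwS : w ∈ S := by simp [hS, hw, hxw]
    have hwT : w ∉ T := by simp [hT, hyw]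
    have hST : S = insert w T := by
      ext j
      by_cases hj : j = w
      · subst hj; simp [hwS]
      · rw [Finset.mem_insert]; simp [hj, hmem j hj]
    rw [hST, Finset.card_insert_of_notMem hwT]
    simp [Nat.odd_add_one]
  | true =>
    have hyw : y w = false := by have := hf.1; cases hy : y w <;> simp_all
    have hwT : w ∈ T := by simp [hT, hw, hyw]
    have hwS : w ∉ S := by simp [hS, hxw]
    have hTS : T = insert w S := by
      ext j
      by_cases hj : j = w
      · subst hj; simp [hwT]
      · rw [Finset.mem_insert]; simp [hj, (hmem j hj).symm]
    rw [hTS, Finset.card_insert_of_notMem hwS]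
    simp [Nat.odd_add_one]

lemma flips_total (hf : Flips x y i) : TwE N x y ∨ TwE N y x := by
  by_cases hs : x i = true ↔ pOdd x i
  · exact Or.inl (twE_of_flips hf hs)
  · right
    apply twE_of_flips (flips_symm hf)
    have hp : pOdd y i ↔ pOdd x i := pOdd_congr (fun j hj => (hf.2 j (ne_of_lt hj)).symm)
    have hyi : y i = !(x i) := flips_y_eq hf
    rw [hyi, hp]
    cases hx : x i <;> simp_all

lemma twE_antisymm (h1 : TwE N x y) (h2 : TwE N y x) : x = y := by
  by_contra hne
  obtain ⟨i, hf, hs⟩ := twE_cases h1 hne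
  have hs2 := src_of_twE h2 (flips_symm hf)
  have hp : pOdd y i ↔ pOdd x i := pOdd_congr (fun j hj => (hf.2 j (ne_of_lt hj)).symm)
  have hyi : y i = !(x i) := flips_y_eq hf
  rw [hyi, hp] at hs2
  cases hx : x i <;> simp_all

lemma exists_src (i : Fin N) : ∃ x : Fin N → Bool, x i = true ↔ pOdd x i := by
  classical
  set x0 : Fin N → Bool := fun _ => false with hx0
  refine ⟨Function.update x0 i (decide (pOdd x0 i)), ?_⟩
  have hag : ∀ j, j < i → Function.update x0 i (decide (pOdd x0 i)) j = x0 j := by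
    intro j hj
    exact Function.update_of_ne (ne_of_lt hj) _ _
  have hp := pOdd_congr hag (y := x0)
  rw [Function.update_self, hp]
  simp [decide_eq_true_iff]


lemma flips_coord_unique {a b : Fin N → Bool} {j j' : Fin N}
    (h : Flips a b j) (h' : Flips a b j') : j = j' := by
  by_contra hne
  exact h.1 (h'.2 j hne)

section Morph

variable {m n : ℕ}

def Collapses (g : (Fin m → Bool) → Fin n → Bool) (i : Fin m) : Prop :=
  ∀ x y, Flips x y i → g x = g y

def SendsTo (g : (Fin m → Bool) → Fin n → Bool) (i : Fin m) (j : Fin n) : Prop :=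
  ∀ x y, Flips x y i → Flips (g x) (g y) j

lemma dichotomy {g : (Fin m → Bool) → Fin n → Bool} (hd : DimPres g) (i : Fin m) :
    Collapses g i ∨ ∃ j, SendsTo g i j := by
  set x0 : Fin m → Bool := fun _ => false with hx0
  set y0 := Function.update x0 i (!x0 i) with hy0
  have hf0 : Flips x0 y0 i := flips_flip x0 i
  rcases hd x0 y0 x0 y0 i hf0 hf0 with ⟨h, _⟩ | ⟨j, hj, _⟩
  · left
    intro x y hf
    rcases hd x0 y0 x y i hf0 hf with ⟨_, h2⟩ | ⟨j, hj0, _⟩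
    · exact h2
    · exact absurd h (flips_ne hj0)
  · right
    refine ⟨j, fun x y hf => ?_⟩
    rcases hd x0 y0 x y i hf0 hf with ⟨h1, _⟩ | ⟨j', hj0', hj'⟩
    · exact absurd h1 (flips_ne hj)
    · rwa [flips_coord_unique hj0' hj] at hj'

lemma sendsTo_not_lt {g : (Fin m → Bool) → Fin n → Bool}
    (hg : IsGraphHom (TwE m) (TwE n) g) {i i' : Fin m} {j : Fin n}
    (hii : i < i') (h1 : SendsTo g i j) (h2 : SendsTo g i' j) : False := by
  obtain ⟨x, hx⟩ := exists_src i
  set y := Function.update x i (!x i) with hy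
  set u := Function.update x i' (!x i') with hu
  set w := Function.update y i' (!y i') with hw
  have hii' : i ≠ i' := ne_of_lt hii
  have hfxy : Flips x y i := flips_flip x i
  have hfxu : Flips x u i' := flips_flip x i'
  have hfyw : Flips y w i' := flips_flip y i'
  have hui : u i = x i := Function.update_of_ne hii' _ _
  have hyi : y i = !x i := Function.update_self _ _ _
  have hwi : w i = !x i := by
    rw [hw, Function.update_of_ne hii' _ _, hyi]
  have hfuw : Flips u w i := by
    constructor
    · rw [hui, hwi]; cases x i <;> simp
    · intro c hc
      by_cases hc' : c = i'
      · subst hc'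
        rw [hu, hw, Function.update_self, Function.update_self,
          hy, Function.update_of_ne (Ne.symm hii') _ _]
      · rw [hu, hw, Function.update_of_ne hc' _ _, Function.update_of_ne hc' _ _,
          hy, Function.update_of_ne hc _ _]
  have hsu : u i = true ↔ pOdd u i := by
    have hp : pOdd u i ↔ pOdd x i :=
      pOdd_congr (fun c hc => Function.update_of_ne (ne_of_lt (lt_trans hc hii)) _ _)
    rw [hui, hp]; exact hx
  have hTxy : TwE m x y := twE_of_flips hfxy hx
  have hTuw : TwE m u w := twE_of_flips hfuw hsu
  have hgxy := h1 x y hfxy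
  have hgxu := h2 x u hfxu
  have hgyw := h2 y w hfyw
  have guy : g u = g y := by
    funext c
    by_cases hc : c = j
    · subst hc
      exact bool_eq_of_ne (fun e => hgxu.1 e.symm) (fun e => hgxy.1 e.symm)
    · rw [← hgxu.2 c hc, hgxy.2 c hc]
  have gwx : g w = g x := by
    funext c
    by_cases hc : c = j
    · subst hc
      exact bool_eq_of_ne (fun e => hgyw.1 e.symm) (fun e => hgxy.1 e)
    · rw [← hgyw.2 c hc, ← hgxy.2 c hc]
  have h3 := hg x y hTxy
  have h4 := hg u w hTuw
  rw [guy, gwx] at h4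
  exact flips_ne hgxy (twE_antisymm h3 h4)

lemma sendsTo_inj {g : (Fin m → Bool) → Fin n → Bool}
    (hg : IsGraphHom (TwE m) (TwE n) g) {i i' : Fin m} {j : Fin n}
    (h1 : SendsTo g i j) (h2 : SendsTo g i' j) : i = i' := by
  rcases lt_trichotomy i i' with h | h | h
  · exact absurd (sendsTo_not_lt hg h h1 h2) not_false
  · exact h
  · exact absurd (sendsTo_not_lt hg h h2 h1) not_false

lemma collapses_not_lt {g : (Fin m → Bool) → Fin n → Bool}
    (hg : IsGraphHom (TwE m) (TwE n) g) {i l : Fin m} {j : Fin n}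
    (hl : l < i) (hsi : SendsTo g i j) (hcl : Collapses g l) : False := by
  obtain ⟨x, hx⟩ := exists_src i
  set y := Function.update x i (!x i) with hy
  set x' := Function.update x l (!x l) with hx'
  set y' := Function.update y l (!y l) with hy'
  have hli : l ≠ i := ne_of_lt hl
  have hfxy : Flips x y i := flips_flip x i
  have hfxx' : Flips x x' l := flips_flip x l
  have hfyy' : Flips y y' l := flips_flip y l
  have hyi : y i = !x i := Function.update_self _ _ _
  have hy'i : y' i = !x i := by rw [hy', Function.update_of_ne (Ne.symm hli) _ _, hyi]
  have hx'i : x' i = x i := Function.update_of_ne (Ne.symm hli) _ _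
  have hfy'x' : Flips y' x' i := by
    constructor
    · rw [hy'i, hx'i]; cases x i <;> simp
    · intro c hc
      by_cases hc' : c = l
      · subst hc'
        rw [hy', hx', Function.update_self, Function.update_self,
          hy, Function.update_of_ne hli _ _]
      · rw [hy', hx', Function.update_of_ne hc' _ _, Function.update_of_ne hc' _ _,
          hy, Function.update_of_ne hc _ _]
  have hpy' : pOdd y' i ↔ ¬ pOdd x i := by
    have h1 : pOdd y' i ↔ pOdd x' i :=
      pOdd_congr (fun c hc => hfy'x'.2 c (ne_of_lt hc))
    have h2 : pOdd x' i ↔ ¬ pOdd x i := pOdd_flip (flips_symm hfxx') hl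
    rw [h1, h2]
  have hsy' : y' i = true ↔ pOdd y' i := by
    rw [hy'i, hpy']
    cases hxi : x i <;> simp_all
  have hTxy : TwE m x y := twE_of_flips hfxy hx
  have hTy'x' : TwE m y' x' := twE_of_flips hfy'x' hsy'
  have hgx : g x = g x' := hcl x x' hfxx'
  have hgy : g y = g y' := hcl y y' hfyy'
  have h3 := hg x y hTxy
  have h4 := hg y' x' hTy'x'
  rw [← hgx, ← hgy] at h4
  exact flips_ne (hsi x y hfxy) (twE_antisymm h3 h4)


noncomputable def DOf (g : (Fin m → Bool) → Fin n → Bool) : Finset (Fin m) :=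
  @Finset.filter _ (fun i => ¬ Collapses g i) (Classical.decPred _) Finset.univ

noncomputable def kOf (g : (Fin m → Bool) → Fin n → Bool) : ℕ := (DOf g).card

lemma mem_DOf {g : (Fin m → Bool) → Fin n → Bool} {i : Fin m} :
    i ∈ DOf g ↔ ¬ Collapses g i := by
  classical
  simp [DOf]

lemma DOf_lower {g : (Fin m → Bool) → Fin n → Bool}
    (hg : IsGraphHom (TwE m) (TwE n) g) (hd : DimPres g) {i l : Fin m}
    (hi : i ∈ DOf g) (hl : l < i) : l ∈ DOf g := by
  rw [mem_DOf] at hi ⊢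
  intro hcl
  rcases dichotomy hd i with hc | ⟨j, hsi⟩
  · exact hi hc
  · exact collapses_not_lt hg hl hsi hcl

lemma mem_DOf_iff_lt {g : (Fin m → Bool) → Fin n → Bool}
    (hg : IsGraphHom (TwE m) (TwE n) g) (hd : DimPres g) {i : Fin m} :
    i ∈ DOf g ↔ (i : ℕ) < kOf g := by
  constructor
  · intro hi
    have hsub : Finset.Iic i ⊆ DOf g := by
      intro l hl
      rw [Finset.mem_Iic] at hl
      rcases lt_or_eq_of_le hl with h | h
      · exact DOf_lower hg hd hi h
      · exact h ▸ hi
    have := Finset.card_le_card hsub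
    rw [Fin.card_Iic] at this
    have hk : kOf g = (DOf g).card := rfl
    omega
  · intro hi
    by_contra hni
    have hsub : DOf g ⊆ Finset.Iio i := by
      intro l hl
      rw [Finset.mem_Iio]
      rcases lt_trichotomy l i with h | h | h
      · exact h
      · exact absurd (h ▸ hl) hni
      · exact absurd (DOf_lower hg hd hl h) hni
    have := Finset.card_le_card hsub
    rw [Fin.card_Iio] at this
    have hk : kOf g = (DOf g).card := rfl
    omega

lemma kOf_le (g : (Fin m → Bool) → Fin n → Bool) : kOf g ≤ m := by
  have := Finset.card_le_univ (DOf g)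
  simpa [kOf] using this


lemma g_eq_of_agree {g : (Fin m → Bool) → Fin n → Bool}
    (hg : IsGraphHom (TwE m) (TwE n) g) (hd : DimPres g) {x y : Fin m → Bool}
    (h : ∀ i : Fin m, (i : ℕ) < kOf g → x i = y i) : g x = g y := by
  classical
  suffices key : ∀ c : ℕ, ∀ x y : Fin m → Bool,
      (Finset.univ.filter (fun i => x i ≠ y i)).card = c →
      (∀ i : Fin m, (i : ℕ) < kOf g → x i = y i) → g x = g y by
    exact key _ x y rfl h
  intro c
  induction c using Nat.strong_induction_on with
  | _ c IH =>
    intro x y hc h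
    rcases Finset.eq_empty_or_nonempty (Finset.univ.filter (fun i => x i ≠ y i)) with he | ⟨l, hl⟩
    · have hxy : x = y := by
        funext i
        by_contra hne
        have : i ∈ Finset.univ.filter (fun i => x i ≠ y i) := by simp [hne]
        rw [he] at this
        exact absurd this (Finset.notMem_empty i)
      rw [hxy]
    · rw [Finset.mem_filter] at hl
      have hxl : x l ≠ y l := hl.2
      have hlk : ¬ (l : ℕ) < kOf g := fun hlt => hxl (h l hlt)
      have hcl : Collapses g l := by
        by_contra hncl
        exact hlk ((mem_DOf_iff_lt hg hd).1 (mem_DOf.2 hncl))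
      set y' := Function.update y l (x l) with hy'
      have hfy' : Flips y' y l := by
        constructor
        · rw [hy', Function.update_self]; exact hxl
        · intro j hj; rw [hy', Function.update_of_ne hj]
      have hgy' : g y' = g y := hcl y' y hfy'
      have hfe : Finset.univ.filter (fun i => x i ≠ y' i) =
          (Finset.univ.filter (fun i => x i ≠ y i)).erase l := by
        ext i
        rw [Finset.mem_erase, Finset.mem_filter, Finset.mem_filter]
        by_cases hi : i = l
        · subst hi
          simp [hy', Function.update_self]
        · simp [hy', Function.update_of_ne hi, hi]
      have hcard : (Finset.univ.filter (fun i => x i ≠ y' i)).card = c - 1 := by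
        rw [hfe, Finset.card_erase_of_mem (Finset.mem_filter.2 hl), hc]
      have hc1 : 1 ≤ c := by
        rw [← hc]
        exact Finset.card_pos.2 ⟨l, Finset.mem_filter.2 hl⟩
      have hlt : c - 1 < c := by omega
      have h' : ∀ i : Fin m, (i : ℕ) < kOf g → x i = y' i := by
        intro i hik
        have hil : i ≠ l := fun e => hlk (e ▸ hik)
        rw [hy', Function.update_of_ne hil]
        exact h i hik
      have := IH (c - 1) hlt x y' hcard h'
      rw [this, hgy']

lemma flips_char {k' : ℕ} {q : (Fin k' → Bool) → (Fin n → Bool)} {ψ : Fin k' → Fin n}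
    (hψ : Function.Injective ψ)
    (hmap : ∀ (i : Fin k') (u v : Fin k' → Bool), Flips u v i → Flips (q u) (q v) (ψ i)) :
    ∀ u v : Fin k' → Bool,
      (∀ i, ((q u (ψ i) = q v (ψ i)) ↔ u i = v i)) ∧
      (∀ j, j ∉ Set.range ψ → q u j = q v j) := by
  classical
  suffices key : ∀ c : ℕ, ∀ u v : Fin k' → Bool,
      (Finset.univ.filter (fun a => u a ≠ v a)).card = c →
      (∀ i, ((q u (ψ i) = q v (ψ i)) ↔ u i = v i)) ∧
      (∀ j, j ∉ Set.range ψ → q u j = q v j) by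
    exact fun u v => key _ u v rfl
  intro c
  induction c using Nat.strong_induction_on with
  | _ c IH =>
    intro u v hc
    rcases Finset.eq_empty_or_nonempty (Finset.univ.filter (fun a => u a ≠ v a)) with he | ⟨l, hl⟩
    · have huv : u = v := by
        funext i
        by_contra hne
        have : i ∈ Finset.univ.filter (fun a => u a ≠ v a) := by simp [hne]
        rw [he] at this
        exact absurd this (Finset.notMem_empty i)
      subst huv
      exact ⟨fun i => by simp, fun j _ => rfl⟩
    · rw [Finset.mem_filter] at hl
      have hul : u l ≠ v l := hl.2
      set v' := Function.update v l (u l) with hv'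
      have hfv' : Flips v' v l := by
        constructor
        · rw [hv', Function.update_self]; exact hul
        · intro j hj; rw [hv', Function.update_of_ne hj]
      have himg : Flips (q v') (q v) (ψ l) := hmap l v' v hfv'
      have hfe : Finset.univ.filter (fun a => u a ≠ v' a) =
          (Finset.univ.filter (fun a => u a ≠ v a)).erase l := by
        ext i
        rw [Finset.mem_erase, Finset.mem_filter, Finset.mem_filter]
        by_cases hi : i = l
        · subst hi
          simp [hv', Function.update_self]
        · simp [hv', Function.update_of_ne hi, hi]
      have hcard : (Finset.univ.filter (fun a => u a ≠ v' a)).card = c - 1 := by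
        rw [hfe, Finset.card_erase_of_mem (Finset.mem_filter.2 hl), hc]
      have hc1 : 1 ≤ c := by
        rw [← hc]
        exact Finset.card_pos.2 ⟨l, Finset.mem_filter.2 hl⟩
      obtain ⟨IH1, IH2⟩ := IH (c - 1) (by omega) u v' hcard
      constructor
      · intro i
        by_cases hi : i = l
        · subst hi
          have h1 : q u (ψ i) = q v' (ψ i) := (IH1 i).2 (by rw [hv', Function.update_self])
          have h2 : q v' (ψ i) ≠ q v (ψ i) := himg.1
          constructor
          · intro e; exact absurd (h1.symm.trans e) h2
          · intro e; exact absurd e hul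
        · have hψi : ψ i ≠ ψ l := fun e => hi (hψ e)
          have h1 : q v' (ψ i) = q v (ψ i) := himg.2 _ hψi
          have h2 : v' i = v i := Function.update_of_ne hi _ _
          rw [← h1, ← h2]
          exact IH1 i
      · intro j hj
        have hjl : j ≠ ψ l := fun e => hj ⟨l, e.symm⟩
        rw [IH2 j hj, himg.2 j hjl]

lemma inj_of_sends {k' : ℕ} {q : (Fin k' → Bool) → (Fin n → Bool)} {ψ : Fin k' → Fin n}
    (hψ : Function.Injective ψ)
    (hmap : ∀ (i : Fin k') (u v : Fin k' → Bool), Flips u v i → Flips (q u) (q v) (ψ i)) :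
    Function.Injective q := by
  intro u v h
  funext i
  exact ((flips_char hψ hmap u v).1 i).1 (by rw [h])


lemma card_restrict {k' : ℕ} (hkm : k' ≤ m) (x : Fin m → Bool) (i : Fin k') :
    (Finset.univ.filter (fun j : Fin m => j < Fin.castLE hkm i ∧ x j = false)).card =
    (Finset.univ.filter (fun j : Fin k' => j < i ∧ x (Fin.castLE hkm j) = false)).card := by
  have himg : (Finset.univ.filter (fun j : Fin m => j < Fin.castLE hkm i ∧ x j = false)) =
      (Finset.univ.filter (fun j : Fin k' => j < i ∧ x (Fin.castLE hkm j) = false)).image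
        (Fin.castLE hkm) := by
    ext j
    rw [Finset.mem_image]
    simp only [Finset.mem_filter, Finset.mem_univ, true_and]
    constructor
    · rintro ⟨hji, hjx⟩
      have hji' : (j : ℕ) < (i : ℕ) := hji
      have hjk : (j : ℕ) < k' := lt_trans hji' i.isLt
      refine ⟨⟨(j : ℕ), hjk⟩, ⟨?_, ?_⟩, ?_⟩
      · rw [Fin.lt_def]; exact hji'
      · exact hjx
      · rfl
    · rintro ⟨a, ⟨hai, hax⟩, rfl⟩
      refine ⟨by rw [Fin.lt_def]; exact hai, hax⟩
  rw [himg, Finset.card_image_of_injective _ (Fin.castLE_injective hkm)]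

variable (g : (Fin m → Bool) → Fin n → Bool)

noncomputable def sMap : (Fin m → Bool) → (Fin (kOf g) → Bool) :=
  fun x a => x (Fin.castLE (kOf_le g) a)

noncomputable def extMap : (Fin (kOf g) → Bool) → (Fin m → Bool) :=
  fun u j => if h : (j : ℕ) < kOf g then u ⟨(j : ℕ), h⟩ else false

noncomputable def hMap : (Fin (kOf g) → Bool) → (Fin n → Bool) := fun u => g (extMap g u)

variable {g}

lemma sMap_extMap (u : Fin (kOf g) → Bool) : sMap g (extMap g u) = u := by
  funext a
  show extMap g u (Fin.castLE (kOf_le g) a) = u a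
  simp only [extMap]
  rw [dif_pos (show ((Fin.castLE (kOf_le g) a : Fin m) : ℕ) < kOf g from a.isLt)]
  exact congrArg u (Fin.ext rfl)

lemma sMap_surj : Function.Surjective (sMap g) :=
  fun u => ⟨extMap g u, sMap_extMap u⟩

lemma extMap_val (u : Fin (kOf g) → Bool) (a : Fin (kOf g)) :
    extMap g u (Fin.castLE (kOf_le g) a) = u a := by
  have := congrFun (sMap_extMap u) a
  exact this

lemma g_extMap_sMap (hg : IsGraphHom (TwE m) (TwE n) g) (hd : DimPres g) (x : Fin m → Bool) :
    g (extMap g (sMap g x)) = g x := by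
  apply g_eq_of_agree hg hd
  intro i hik
  show (if h : (i : ℕ) < kOf g then sMap g x ⟨(i : ℕ), h⟩ else false) = x i
  rw [dif_pos hik]
  rfl

lemma g_factor (hg : IsGraphHom (TwE m) (TwE n) g) (hd : DimPres g) :
    g = hMap g ∘ sMap g := by
  funext x
  exact (g_extMap_sMap hg hd x).symm

lemma sMap_hom (hg : IsGraphHom (TwE m) (TwE n) g) (hd : DimPres g) :
    IsGraphHom (TwE m) (TwE (kOf g)) (sMap g) := by
  intro x y hxy
  rcases hxy with he | ⟨i, hag, hfl, hsrc⟩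
  · rw [he]; exact twE_refl
  · by_cases hik : (i : ℕ) < kOf g
    · refine Or.inr ⟨⟨(i : ℕ), hik⟩, ?_, ?_, ?_⟩
      · intro j hj
        apply hag
        intro he
        have hv : (j : ℕ) = (i : ℕ) := congrArg Fin.val he
        exact hj (Fin.ext hv)
      · show y (Fin.castLE (kOf_le g) ⟨(i : ℕ), hik⟩) = !(x (Fin.castLE (kOf_le g) ⟨(i : ℕ), hik⟩))
        have hci : Fin.castLE (kOf_le g) ⟨(i : ℕ), hik⟩ = i := Fin.ext rfl
        rw [hci]
        exact hfl
      · have hci : Fin.castLE (kOf_le g) ⟨(i : ℕ), hik⟩ = i := Fin.ext rfl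
        have hcr := card_restrict (kOf_le g) x ⟨(i : ℕ), hik⟩
        rw [hci] at hcr
        rw [show sMap g x ⟨(i : ℕ), hik⟩ = x i from rfl]
        rw [show (Finset.univ.filter (fun j : Fin (kOf g) =>
            j < ⟨(i : ℕ), hik⟩ ∧ sMap g x j = false)) =
          (Finset.univ.filter (fun j : Fin (kOf g) =>
            j < ⟨(i : ℕ), hik⟩ ∧ x (Fin.castLE (kOf_le g) j) = false)) from rfl]
        rw [← hcr]
        exact hsrc
    · left
      funext a
      show x (Fin.castLE (kOf_le g) a) = y (Fin.castLE (kOf_le g) a)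
      apply hag
      intro he
      apply hik
      rw [← he]
      exact a.isLt

lemma sMap_dimPres : DimPres (sMap g) := by
  intro x1 y1 x2 y2 i hf1 hf2
  by_cases hik : (i : ℕ) < kOf g
  · have hci : Fin.castLE (kOf_le g) ⟨(i : ℕ), hik⟩ = i := Fin.ext rfl
    have key : ∀ x y : Fin m → Bool, Flips x y i → Flips (sMap g x) (sMap g y) ⟨(i : ℕ), hik⟩ := by
      intro x y hf
      constructor
      · show x (Fin.castLE (kOf_le g) ⟨(i : ℕ), hik⟩) ≠ y (Fin.castLE (kOf_le g) ⟨(i : ℕ), hik⟩)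
        rw [hci]
        exact hf.1
      · intro j hj
        apply hf.2
        intro he
        have hv : (j : ℕ) = (i : ℕ) := congrArg Fin.val he
        exact hj (Fin.ext hv)
    exact Or.inr ⟨⟨(i : ℕ), hik⟩, key x1 y1 hf1, key x2 y2 hf2⟩
  · have key : ∀ x y : Fin m → Bool, Flips x y i → sMap g x = sMap g y := by
      intro x y hf
      funext a
      show x (Fin.castLE (kOf_le g) a) = y (Fin.castLE (kOf_le g) a)
      apply hf.2
      intro he
      apply hik
      rw [← he]
      exact a.isLt
    exact Or.inl ⟨key x1 y1 hf1, key x2 y2 hf2⟩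

noncomputable def φg (hd : DimPres g) (i : Fin m) (h : ¬ Collapses g i) : Fin n :=
  Classical.choose ((dichotomy hd i).resolve_left h)

lemma φg_spec (hd : DimPres g) (i : Fin m) (h : ¬ Collapses g i) :
    SendsTo g i (φg hd i h) :=
  Classical.choose_spec ((dichotomy hd i).resolve_left h)

lemma active_of_lt (hg : IsGraphHom (TwE m) (TwE n) g) (hd : DimPres g)
    (a : Fin (kOf g)) : ¬ Collapses g (Fin.castLE (kOf_le g) a) :=
  mem_DOf.1 ((mem_DOf_iff_lt hg hd).2 a.isLt)

noncomputable def ψh (hg : IsGraphHom (TwE m) (TwE n) g) (hd : DimPres g) :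
    Fin (kOf g) → Fin n :=
  fun a => φg hd (Fin.castLE (kOf_le g) a) (active_of_lt hg hd a)

lemma ψh_inj (hg : IsGraphHom (TwE m) (TwE n) g) (hd : DimPres g) :
    Function.Injective (ψh hg hd) := by
  intro a a' he
  have h1 := φg_spec hd (Fin.castLE (kOf_le g) a) (active_of_lt hg hd a)
  have h2 := φg_spec hd (Fin.castLE (kOf_le g) a') (active_of_lt hg hd a')
  rw [show ψh hg hd a = φg hd _ (active_of_lt hg hd a) from rfl] at he
  rw [he] at h1
  have := sendsTo_inj hg h1 h2
  exact Fin.castLE_injective _ this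

lemma extMap_flips {u v : Fin (kOf g) → Bool} {a : Fin (kOf g)} (hf : Flips u v a) :
    Flips (extMap g u) (extMap g v) (Fin.castLE (kOf_le g) a) := by
  constructor
  · rw [extMap_val, extMap_val]
    exact hf.1
  · intro j hj
    show (if h : (j : ℕ) < kOf g then u ⟨(j : ℕ), h⟩ else false) =
      (if h : (j : ℕ) < kOf g then v ⟨(j : ℕ), h⟩ else false)
    by_cases h : (j : ℕ) < kOf g
    · rw [dif_pos h, dif_pos h]
      apply hf.2
      intro he
      have hv : (j : ℕ) = (a : ℕ) := congrArg Fin.val he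
      exact hj (Fin.ext hv)
    · rw [dif_neg h, dif_neg h]

lemma hMap_sends (hg : IsGraphHom (TwE m) (TwE n) g) (hd : DimPres g)
    (a : Fin (kOf g)) (u v : Fin (kOf g) → Bool) (hf : Flips u v a) :
    Flips (hMap g u) (hMap g v) (ψh hg hd a) :=
  φg_spec hd _ (active_of_lt hg hd a) _ _ (extMap_flips hf)

lemma hMap_dimPres (hg : IsGraphHom (TwE m) (TwE n) g) (hd : DimPres g) :
    DimPres (hMap g) := by
  intro x1 y1 x2 y2 i hf1 hf2
  exact Or.inr ⟨ψh hg hd i, hMap_sends hg hd i x1 y1 hf1, hMap_sends hg hd i x2 y2 hf2⟩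

lemma hMap_inj (hg : IsGraphHom (TwE m) (TwE n) g) (hd : DimPres g) :
    Function.Injective (hMap g) :=
  inj_of_sends (ψh_inj hg hd) (hMap_sends hg hd)

lemma hMap_hom (hg : IsGraphHom (TwE m) (TwE n) g) (hd : DimPres g) :
    IsGraphHom (TwE (kOf g)) (TwE n) (hMap g) := by
  intro u v huv
  rcases huv with he | ⟨i, hag, hfl, hsrc⟩
  · rw [he]; exact twE_refl
  · have hfv : Flips u v i := by
      refine ⟨?_, hag⟩
      rw [hfl]
      cases u i <;> simp
    have hext := extMap_flips (g := g) hfv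
    have hsrcext : extMap g u (Fin.castLE (kOf_le g) i) = true ↔
        pOdd (extMap g u) (Fin.castLE (kOf_le g) i) := by
      rw [extMap_val]
      unfold pOdd
      have hcr := card_restrict (kOf_le g) (extMap g u) i
      rw [hcr]
      have hfe : Finset.univ.filter
            (fun j : Fin (kOf g) => j < i ∧ extMap g u (Fin.castLE (kOf_le g) j) = false) =
          Finset.univ.filter (fun j : Fin (kOf g) => j < i ∧ u j = false) := by
        apply Finset.filter_congr
        intro j _
        rw [extMap_val]
      rw [hfe]
      exact hsrc
    exact hg _ _ (twE_of_flips hext hsrcext)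

end Morph


section Rigid

variable {k n : ℕ}

lemma rigidity {h1 h2 : (Fin k → Bool) → Fin n → Bool}
    {ψ1 ψ2 : Fin k → Fin n}
    (hm1 : IsGraphHom (TwE k) (TwE n) h1) (hm2 : IsGraphHom (TwE k) (TwE n) h2)
    (hψ1 : Function.Injective ψ1) (hψ2 : Function.Injective ψ2)
    (hs1 : ∀ (i : Fin k) (u v : Fin k → Bool), Flips u v i → Flips (h1 u) (h1 v) (ψ1 i))
    (hs2 : ∀ (i : Fin k) (u v : Fin k → Bool), Flips u v i → Flips (h2 u) (h2 v) (ψ2 i))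
    (hr : ∀ u, ∃ a, h1 a = h2 u) : h1 = h2 := by
  classical
  have hi1 : Function.Injective h1 := inj_of_sends hψ1 hs1
  have hi2 : Function.Injective h2 := inj_of_sends hψ2 hs2
  have char1 := flips_char hψ1 hs1
  set σ : (Fin k → Bool) → (Fin k → Bool) := fun u => Classical.choose (hr u) with hσdef
  have hσ : ∀ u, h1 (σ u) = h2 u := fun u => Classical.choose_spec (hr u)
  -- step A : each ψ2 i is some ψ1 a
  have stepA : ∀ i : Fin k, ∃ a, ψ1 a = ψ2 i := by
    intro i
    set u0 : Fin k → Bool := fun _ => false with hu0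
    set v0 := Function.update u0 i (!u0 i) with hv0
    have hf0 : Flips u0 v0 i := flips_flip u0 i
    have himg := hs2 i u0 v0 hf0
    have hne : σ u0 ≠ σ v0 := by
      intro he
      apply himg.1
      rw [← hσ u0, ← hσ v0, he]
    obtain ⟨a, ha⟩ : ∃ a, σ u0 a ≠ σ v0 a := by
      by_contra hno
      push_neg at hno
      exact hne (funext hno)
    refine ⟨a, ?_⟩
    by_contra hne2
    apply ha
    apply ((char1 (σ u0) (σ v0)).1 a).1
    rw [hσ u0, hσ v0]
    exact himg.2 _ hne2
  set ρ : Fin k → Fin k := fun i => Classical.choose (stepA i) with hρdef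
  have hρ : ∀ i, ψ1 (ρ i) = ψ2 i := fun i => Classical.choose_spec (stepA i)
  have hρinj : Function.Injective ρ := by
    intro i i' he
    apply hψ2
    rw [← hρ i, ← hρ i', he]
  -- step B : σ maps i-flips to (ρ i)-flips
  have stepB : ∀ (i : Fin k) (u v : Fin k → Bool), Flips u v i → Flips (σ u) (σ v) (ρ i) := by
    intro i u v hf
    have himg := hs2 i u v hf
    constructor
    · intro he
      apply himg.1
      rw [← hσ u, ← hσ v, ← hρ i]
      exact ((char1 (σ u) (σ v)).1 (ρ i)).2 he
    · intro a ha
      have hψa : ψ1 a ≠ ψ2 i := by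
        intro he
        exact ha (hψ1 (he.trans (hρ i).symm))
      apply ((char1 (σ u) (σ v)).1 a).1
      rw [hσ u, hσ v]
      exact himg.2 _ hψa
  -- step C : σ is a graph hom
  have stepC : ∀ u v, TwE k u v → TwE k (σ u) (σ v) := by
    intro u v huv
    by_cases he : u = v
    · rw [he]; exact twE_refl
    · obtain ⟨i, hfv, hsrc⟩ := twE_cases huv he
      rcases flips_total (stepB i u v hfv) with h | h
      · exact h
      · exfalso
        have hT2 := hm2 u v huv
        have hT1 := hm1 _ _ h
        rw [hσ u, hσ v] at hT1
        exact (fun e => he (hi2 e)) (twE_antisymm hT2 hT1)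
  -- step D : ρ is strictly monotone
  have stepD : StrictMono ρ := by
    intro i l hil
    have hne : ρ i ≠ ρ l := fun e => (ne_of_lt hil) (hρinj e)
    rcases lt_or_gt_of_ne hne with h | h
    · exact h
    · exfalso
      obtain ⟨x, hx⟩ := exists_src i
      set y := Function.update x i (!x i) with hy
      set x' := Function.update x l (!x l) with hx'
      set y' := Function.update y l (!y l) with hy'
      have hil' : i ≠ l := ne_of_lt hil
      have hfxy : Flips x y i := flips_flip x i
      have hfxx' : Flips x x' l := flips_flip x l
      have hx'i : x' i = x i := Function.update_of_ne hil' _ _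
      have hyi : y i = !x i := Function.update_self _ _ _
      have hy'i : y' i = !x i := by
        rw [hy', Function.update_of_ne hil' _ _, hyi]
      have hfx'y' : Flips x' y' i := by
        constructor
        · rw [hx'i, hy'i]; cases x i <;> simp
        · intro c hc
          by_cases hc' : c = l
          · subst hc'
            rw [hx', hy', Function.update_self, Function.update_self,
              hy, Function.update_of_ne (Ne.symm hil') _ _]
          · rw [hx', hy', Function.update_of_ne hc' _ _, Function.update_of_ne hc' _ _,
              hy, Function.update_of_ne hc _ _]
      have hsx' : x' i = true ↔ pOdd x' i := by
        have hp : pOdd x' i ↔ pOdd x i :=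
          pOdd_congr (fun c hc => Function.update_of_ne (ne_of_lt (lt_trans hc hil)) _ _)
        rw [hx'i, hp]
        exact hx
      have hT1 := stepC x y (twE_of_flips hfxy hx)
      have hT2 := stepC x' y' (twE_of_flips hfx'y' hsx')
      have hfσ1 := stepB i x y hfxy
      have hfσ2 := stepB i x' y' hfx'y'
      have hfσ3 := stepB l x x' hfxx'
      have src1 := src_of_twE hT1 hfσ1
      have src2 := src_of_twE hT2 hfσ2
      have heq : σ x' (ρ i) = σ x (ρ i) := (hfσ3.2 (ρ i) hne).symm
      have hpar : pOdd (σ x') (ρ i) ↔ ¬ pOdd (σ x) (ρ i) := by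
        have := pOdd_flip (flips_symm hfσ3) h
        tauto
      rw [heq] at src2
      have hiff : pOdd (σ x) (ρ i) ↔ pOdd (σ x') (ρ i) := by
        rw [← src1, ← src2]
      tauto
  -- step E : ρ = id
  have hρsurj : Function.Surjective ρ := Finite.surjective_of_injective hρinj
  have hρid : ρ = id := by
    haveI : WellFoundedLT (Fin k) := inferInstance
    refine (StrictMono.range_inj (γ := Fin k) stepD (strictMono_id (α := Fin k))).1 ?_
    rw [Function.Surjective.range_eq hρsurj, Set.range_id]
  -- step F : σ = id
  have stepF : ∀ (c : ℕ) (hc : c < k) (x : Fin k → Bool), σ x ⟨c, hc⟩ = x ⟨c, hc⟩ := by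
    intro c
    induction c using Nat.strong_induction_on with
    | _ c IH =>
      intro hc x
      set i : Fin k := ⟨c, hc⟩ with hi
      have hbelow : ∀ (z : Fin k → Bool) (j : Fin k), j < i → σ z j = z j := by
        intro z j hj
        exact IH (j : ℕ) hj j.isLt z
      by_cases hsx : x i = true ↔ pOdd x i
      · have hT := stepC x _ (twE_of_flips (flips_flip x i) hsx)
        have hfσ := stepB i x _ (flips_flip x i)
        rw [show ρ i = i from by rw [hρid]; rfl] at hfσ
        have hsrcσ := src_of_twE hT hfσ
        have hp : pOdd (σ x) i ↔ pOdd x i := pOdd_congr (fun j hj => hbelow x j hj)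
        apply boolext
        rw [hsrcσ, hp, hsx]
      · set y := Function.update x i (!x i) with hy
        have hyi : y i = !x i := Function.update_self _ _ _
        have hsy : y i = true ↔ pOdd y i := by
          have hp : pOdd y i ↔ pOdd x i :=
            pOdd_congr (fun c hc => Function.update_of_ne (ne_of_lt hc) _ _)
          rw [hyi, hp]
          cases hxi : x i <;> simp_all
        have hfyx : Flips y x i := flips_symm (flips_flip x i)
        have hT := stepC y x (twE_of_flips hfyx hsy)
        have hfσ := stepB i y x hfyx
        rw [show ρ i = i from by rw [hρid]; rfl] at hfσ
        have hsrcσ := src_of_twE hT hfσ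
        have hp : pOdd (σ y) i ↔ pOdd y i := pOdd_congr (fun j hj => hbelow y j hj)
        have hσy : σ y i = y i := by
          apply boolext
          rw [hsrcσ, hp, hsy]
        have h1ne : σ x i ≠ !x i := by
          rw [← hyi, ← hσy]
          exact fun e => hfσ.1 (e.symm)
        have h2ne : x i ≠ !x i := by cases x i <;> simp
        exact bool_eq_of_ne h1ne h2ne
  have hσid : σ = id := by
    funext x
    funext j
    have := stepF (j : ℕ) j.isLt x
    exact this
  funext u
  rw [← hσ u, hσid]
  rfl

end Rigid


section UniqHelp

variable {k2 n : ℕ}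

lemma no_collapse_of_inj {q : (Fin k2 → Bool) → Fin n → Bool}
    (hq : Function.Injective q) (i : Fin k2) : ¬ Collapses q i := by
  intro hc
  have hf := flips_flip (fun _ => false : Fin k2 → Bool) i
  exact flips_ne hf (hq (hc _ _ hf))

noncomputable def ψq (q : (Fin k2 → Bool) → Fin n → Bool) (hdq : DimPres q)
    (hq : Function.Injective q) : Fin k2 → Fin n :=
  fun i => φg hdq i (no_collapse_of_inj hq i)

lemma ψq_spec (q : (Fin k2 → Bool) → Fin n → Bool) (hdq : DimPres q)
    (hq : Function.Injective q) (i : Fin k2) : SendsTo q i (ψq q hdq hq i) :=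
  φg_spec hdq i _

lemma ψq_inj {q : (Fin k2 → Bool) → Fin n → Bool} (hqm : IsGraphHom (TwE k2) (TwE n) q)
    (hdq : DimPres q) (hq : Function.Injective q) : Function.Injective (ψq q hdq hq) := by
  intro i i' he
  have h1 := ψq_spec q hdq hq i
  have h2 := ψq_spec q hdq hq i'
  rw [he] at h1
  exact sendsTo_inj hqm h1 h2

lemma card_image_pow (q : (Fin k2 → Bool) → Fin n → Bool) (hq : Function.Injective q) :
    (Finset.univ.image q).card = 2 ^ k2 := by
  rw [Finset.card_image_of_injective _ hq, Finset.card_univ, Fintype.card_fun]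
  simp

end UniqHelp

end TwProof

theorem stmt12 (m n : ℕ) (g : (Fin m → Bool) → (Fin n → Bool))
    (hg : IsGraphHom (TwE m) (TwE n) g) (hd : DimPres g) :
    ∃! F : Σ k : ℕ,
        ((Fin m → Bool) → (Fin k → Bool)) × ((Fin k → Bool) → (Fin n → Bool)),
      (IsGraphHom (TwE m) (TwE F.1) F.2.1 ∧ DimPres F.2.1 ∧
        Function.Surjective F.2.1) ∧
      (IsGraphHom (TwE F.1) (TwE n) F.2.2 ∧ DimPres F.2.2 ∧
        Function.Injective F.2.2) ∧
      g = F.2.2 ∘ F.2.1 := by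
  classical
  open TwProof in
  refine ⟨⟨TwProof.kOf g, TwProof.sMap g, TwProof.hMap g⟩,
    ⟨⟨TwProof.sMap_hom hg hd, TwProof.sMap_dimPres, TwProof.sMap_surj⟩,
     ⟨TwProof.hMap_hom hg hd, TwProof.hMap_dimPres hg hd, TwProof.hMap_inj hg hd⟩,
     TwProof.g_factor hg hd⟩, ?_⟩
  rintro ⟨k2, s2, h2⟩ ⟨⟨hs2m, hs2d, hs2s⟩, ⟨hh2m, hh2d, hh2i⟩, hfac⟩
  have himg : Finset.univ.image g = Finset.univ.image h2 := by
    rw [hfac]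
    rw [show Finset.univ.image (h2 ∘ s2) = (Finset.univ.image s2).image h2 from
      (Finset.image_image).symm]
    rw [Finset.image_univ_of_surjective hs2s]
  have himg2 : Finset.univ.image g = Finset.univ.image (TwProof.hMap g) := by
    conv_lhs => rw [TwProof.g_factor hg hd]
    rw [show Finset.univ.image (TwProof.hMap g ∘ TwProof.sMap g) =
      (Finset.univ.image (TwProof.sMap g)).image (TwProof.hMap g) from
      (Finset.image_image).symm]
    rw [Finset.image_univ_of_surjective TwProof.sMap_surj]
  have hc1 : (Finset.univ.image h2).card = 2 ^ k2 :=
    TwProof.card_image_pow h2 hh2i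
  have hc2 : (Finset.univ.image (TwProof.hMap g)).card = 2 ^ (TwProof.kOf g) :=
    TwProof.card_image_pow _ (TwProof.hMap_inj hg hd)
  have hk : k2 = TwProof.kOf g := by
    apply Nat.pow_right_injective (le_refl 2)
    show (2:ℕ) ^ k2 = 2 ^ TwProof.kOf g
    rw [← hc1, ← himg, himg2, hc2]
  subst hk
  have hr : ∀ u, ∃ a, TwProof.hMap g a = h2 u := by
    intro u
    obtain ⟨x, hx⟩ := hs2s u
    refine ⟨TwProof.sMap g x, ?_⟩
    have h1 : TwProof.hMap g (TwProof.sMap g x) = g x :=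
      (congrFun (TwProof.g_factor hg hd) x).symm
    have h2x : g x = h2 u := by
      rw [hfac]
      show (h2 ∘ s2) x = h2 u
      exact congrArg h2 hx
    rw [h1, h2x]
  have hh2eq : TwProof.hMap g = h2 :=
    TwProof.rigidity (TwProof.hMap_hom hg hd) hh2m (TwProof.ψh_inj hg hd)
      (TwProof.ψq_inj hh2m hh2d hh2i) (TwProof.hMap_sends hg hd)
      (fun i u v hf => TwProof.ψq_spec h2 hh2d hh2i i u v hf) hr
  have hs2eq : s2 = TwProof.sMap g := by
    funext x
    apply TwProof.hMap_inj hg hd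
    rw [hh2eq]
    have h1 : h2 (s2 x) = g x := by
      rw [hfac]; rfl
    have h2' : TwProof.hMap g (TwProof.sMap g x) = g x :=
      (congrFun (TwProof.g_factor hg hd) x).symm
    rw [h1, ← hh2eq, h2']
  rw [hs2eq, ← hh2eq]
end
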